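/- arXiv:1010.4108 — 8 statements merged into one kernel-verified Lean document; each statement's English description precedes it below -/
import Mathlib

section
/- Let b ∈ (0, 1/2] and γ ∈ (0, 1). If G has a b-balanced cut S with conductance φ(S) ≤ γ, then there exists x : V → ℝ such that, with x̄ = Σ_{i∈V} μ_i x_i: (1/m)·Σ_{{i,j}∈E} (x_i − x_j)² ≤ 4γ, Σ_{i∈V} μ_i (x_i − x̄)² = 1, and (x_i − x̄)² ≤ (1−b)/b for every i ∈ V. In particular the SDP relaxation psdp(G, b, γ) is feasible. -/
open Finset

/-- Number of edges of `G` with exactly one endpoint in `S` (each such edge counted once). -/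
def cutSize {n : ℕ} (G : SimpleGraph (Fin n)) [DecidableRel G.Adj] (S : Finset (Fin n)) : ℕ :=
  ∑ i ∈ S, ∑ j ∈ Sᶜ, if G.Adj i j then 1 else 0

/-- Volume of a vertex subset: the sum of the degrees of its vertices. -/
def vol {n : ℕ} (G : SimpleGraph (Fin n)) [DecidableRel G.Adj] (S : Finset (Fin n)) : ℕ :=
  ∑ i ∈ S, G.degree i

/-- Conductance `φ(S) = |E(S,S̄)| / min(vol(S), vol(S̄))`. -/
noncomputable def conductance {n : ℕ} (G : SimpleGraph (Fin n)) [DecidableRel G.Adj]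
    (S : Finset (Fin n)) : ℝ :=
  (cutSize G S : ℝ) / min (vol G S : ℝ) (vol G Sᶜ : ℝ)

/-- Sum of a symmetric function over the edges `{i,j} ∈ E` of `G` (each edge counted once). -/
noncomputable def edgeSum {n : ℕ} (G : SimpleGraph (Fin n)) [DecidableRel G.Adj]
    (f : Fin n → Fin n → ℝ) : ℝ :=
  (∑ i, ∑ j, if G.Adj i j then f i j else 0) / 2

set_option maxHeartbeats 1000000 in
/-- **Lemma 2.1 (SDP is a Relaxation).** If `G` has a `b`-balanced cut `S` of conductance
at most `γ`, then the SDP relaxation `psdp(G, b, γ)` is feasible: there is a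
(one-dimensional) embedding `x : V → ℝ` with mean `x̄ = ∑ μ_i x_i` such that
`(1/m)·∑_{{i,j}∈E}(x_i−x_j)² ≤ 4γ`, `∑ μ_i (x_i−x̄)² = 1`, and
`(x_i−x̄)² ≤ (1−b)/b` for all `i`. -/
theorem sdp_is_relaxation {n : ℕ} (G : SimpleGraph (Fin n)) [DecidableRel G.Adj]
    (m : ℕ) (hm : m = G.edgeFinset.card) (hm1 : 1 ≤ m)
    (hdeg : ∀ i, 0 < G.degree i)
    (μ : Fin n → ℝ) (hμ : ∀ i, μ i = (G.degree i : ℝ) / (2 * m))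
    (b γ : ℝ) (hb : 0 < b) (hb2 : b ≤ 1 / 2) (hγ0 : 0 < γ) (hγ1 : γ < 1)
    (S : Finset (Fin n))
    (hbal : b * (vol G Finset.univ : ℝ) ≤ min (vol G S : ℝ) (vol G Sᶜ : ℝ))
    (hcond : conductance G S ≤ γ) :
    ∃ x : Fin n → ℝ,
      (1 / (m : ℝ)) * edgeSum G (fun i j => (x i - x j) ^ 2) ≤ 4 * γ ∧
      ∑ i, μ i * (x i - ∑ j, μ j * x j) ^ 2 = 1 ∧
      ∀ i, (x i - ∑ j, μ j * x j) ^ 2 ≤ (1 - b) / b := by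
  classical
  have hmR : (1 : ℝ) ≤ (m : ℝ) := by exact_mod_cast hm1
  have hm0 : (m : ℝ) ≠ 0 := by linarith
  set vS : ℝ := (vol G S : ℝ) with hvS
  set vT : ℝ := (vol G Sᶜ : ℝ) with hvT
  have hvol : (vol G Finset.univ : ℝ) = 2 * m := by
    have : vol G Finset.univ = 2 * m := by
      rw [hm]; unfold vol; exact G.sum_degrees_eq_twice_card_edges
    rw [this]; push_cast; ring
  have hsumv : vS + vT = 2 * m := by
    rw [hvS, hvT, ← hvol]
    unfold vol
    rw [← Nat.cast_add]
    norm_cast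
    exact Finset.sum_add_sum_compl S _
  have hminpos : 0 < min vS vT := lt_of_lt_of_le (by nlinarith [hvol ▸ hbal]) hbal
  have hvSpos : 0 < vS := lt_of_lt_of_le hminpos (min_le_left _ _)
  have hvTpos : 0 < vT := lt_of_lt_of_le hminpos (min_le_right _ _)
  have hbalS : b * (2 * m) ≤ vS := le_trans (by rw [← hvol]; exact hbal.trans (min_le_left _ _)) le_rfl
  have hbalT : b * (2 * m) ≤ vT := le_trans (by rw [← hvol]; exact hbal.trans (min_le_right _ _)) le_rfl
  set s : ℝ := Real.sqrt vS with hsdef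
  set t : ℝ := Real.sqrt vT with htdef
  have hs0 : 0 < s := Real.sqrt_pos.mpr hvSpos
  have ht0 : 0 < t := Real.sqrt_pos.mpr hvTpos
  have hs2 : s ^ 2 = vS := Real.sq_sqrt hvSpos.le
  have ht2 : t ^ 2 = vT := Real.sq_sqrt hvTpos.le
  have hst : s ^ 2 + t ^ 2 = 2 * m := by rw [hs2, ht2]; exact hsumv
  set x : Fin n → ℝ := fun i => (t / s + s / t) * (if i ∈ S then (1 : ℝ) else 0) - s / t with hxdef
  -- sums of μ
  have hμS : ∑ i ∈ S, μ i = vS / (2 * m) := by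
    simp only [hμ]
    rw [← Finset.sum_div]
    congr 1
    rw [hvS]; unfold vol; push_cast; rfl
  have hμT : ∑ i ∈ Sᶜ, μ i = vT / (2 * m) := by
    simp only [hμ]
    rw [← Finset.sum_div]
    congr 1
    rw [hvT]; unfold vol; push_cast; rfl
  -- mean is zero
  have hmean : ∑ j, μ j * x j = 0 := by
    have hA : ∑ j ∈ S, μ j * x j = (t / s) * ∑ j ∈ S, μ j := by
      rw [Finset.mul_sum]
      apply Finset.sum_congr rfl; intro j hj
      simp only [hxdef, hj, if_true]; ring
    have hB : ∑ j ∈ Sᶜ, μ j * x j = -((s / t) * ∑ j ∈ Sᶜ, μ j) := by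
      have : ∀ j ∈ Sᶜ, μ j * x j = -((s / t) * μ j) := by
        intro j hj
        simp only [hxdef, Finset.mem_compl.mp hj, if_false]; ring
      rw [Finset.sum_congr rfl this, Finset.sum_neg_distrib, Finset.mul_sum]
    rw [← Finset.sum_add_sum_compl S (fun j => μ j * x j), hA, hB, hμS, hμT,
      ← hs2, ← ht2]
    field_simp
    ring
  refine ⟨x, ?_, ?_, ?_⟩
  · -- edge sum bound
    have hxd : ∀ i j, (x i - x j) ^ 2
        = (t / s + s / t) ^ 2 *
          ((if i ∈ S then (1 : ℝ) else 0) - (if j ∈ S then 1 else 0)) ^ 2 := by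
      intro i j; simp only [hxdef]; ring
    have hcount : (∑ i, ∑ j, if G.Adj i j then
        ((if i ∈ S then (1 : ℝ) else 0) - (if j ∈ S then 1 else 0)) ^ 2 else 0)
        = 2 * (cutSize G S : ℝ) := by
      have hcast : (cutSize G S : ℝ)
          = ∑ i ∈ S, ∑ j ∈ Sᶜ, (if G.Adj i j then (1 : ℝ) else 0) := by
        unfold cutSize; push_cast; rfl
      rw [← Finset.sum_add_sum_compl S]
      have e1 : ∀ i ∈ S, (∑ j, if G.Adj i j then
          ((if i ∈ S then (1 : ℝ) else 0) - (if j ∈ S then 1 else 0)) ^ 2 else 0)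
          = ∑ j ∈ Sᶜ, (if G.Adj i j then (1 : ℝ) else 0) := by
        intro i hi
        rw [← Finset.sum_add_sum_compl S]
        have : (∑ j ∈ S, if G.Adj i j then
            ((if i ∈ S then (1 : ℝ) else 0) - (if j ∈ S then 1 else 0)) ^ 2 else 0) = 0 := by
          apply Finset.sum_eq_zero; intro j hj; simp [hi, hj]
        rw [this, zero_add]
        apply Finset.sum_congr rfl
        intro j hj
        simp [hi, Finset.mem_compl.mp hj]
      have e2 : ∀ i ∈ Sᶜ, (∑ j, if G.Adj i j then
          ((if i ∈ S then (1 : ℝ) else 0) - (if j ∈ S then 1 else 0)) ^ 2 else 0)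
          = ∑ j ∈ S, (if G.Adj i j then (1 : ℝ) else 0) := by
        intro i hi
        rw [← Finset.sum_add_sum_compl S]
        have h2 : (∑ j ∈ Sᶜ, if G.Adj i j then
            ((if i ∈ S then (1 : ℝ) else 0) - (if j ∈ S then 1 else 0)) ^ 2 else 0) = 0 := by
          apply Finset.sum_eq_zero; intro j hj
          simp [Finset.mem_compl.mp hi, Finset.mem_compl.mp hj]
        rw [h2, add_zero]
        apply Finset.sum_congr rfl
        intro j hj
        simp [Finset.mem_compl.mp hi, hj]
      rw [Finset.sum_congr rfl e1, Finset.sum_congr rfl e2, hcast]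
      have : (∑ i ∈ Sᶜ, ∑ j ∈ S, if G.Adj i j then (1 : ℝ) else 0)
          = ∑ i ∈ S, ∑ j ∈ Sᶜ, if G.Adj i j then (1 : ℝ) else 0 := by
        rw [Finset.sum_comm]
        apply Finset.sum_congr rfl; intro i _
        apply Finset.sum_congr rfl; intro j _
        simp [G.adj_comm]
      rw [this]; ring
    have hes : edgeSum G (fun i j => (x i - x j) ^ 2)
        = (t / s + s / t) ^ 2 * (cutSize G S : ℝ) := by
      unfold edgeSum
      have : (∑ i, ∑ j, if G.Adj i j then (x i - x j) ^ 2 else 0)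
          = (t / s + s / t) ^ 2 * (∑ i, ∑ j, if G.Adj i j then
            ((if i ∈ S then (1 : ℝ) else 0) - (if j ∈ S then 1 else 0)) ^ 2 else 0) := by
        rw [Finset.mul_sum]
        apply Finset.sum_congr rfl; intro i _
        rw [Finset.mul_sum]
        apply Finset.sum_congr rfl; intro j _
        rw [hxd i j]
        split <;> simp
      rw [this, hcount]; ring
    rw [hes]
    have hcut : (cutSize G S : ℝ) ≤ γ * min vS vT := by
      have := hcond
      unfold conductance at this
      rw [← hvS, ← hvT] at this
      calc (cutSize G S : ℝ) = (cutSize G S : ℝ) / min vS vT * min vS vT := by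
            field_simp
        _ ≤ γ * min vS vT := by
            apply mul_le_mul_of_nonneg_right this hminpos.le
    have hc1 : (t / s + s / t) ^ 2 = (2 * m) ^ 2 / (s ^ 2 * t ^ 2) := by
      rw [← hst]; field_simp; ring
    rw [hc1]
    have hlhs : 1 / (m : ℝ) * ((2 * (m : ℝ)) ^ 2 / (s ^ 2 * t ^ 2) * (cutSize G S : ℝ))
        = 4 * (m : ℝ) * (cutSize G S : ℝ) / (vS * vT) := by
      rw [hs2, ht2]; field_simp; ring
    rw [hlhs, div_le_iff₀ (by positivity)]
    have hcut0 : (0 : ℝ) ≤ (cutSize G S : ℝ) := Nat.cast_nonneg _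
    rcases le_total vS vT with h | h
    · have hmin : min vS vT = vS := min_eq_left h
      rw [hmin] at hcut
      have hTm : (m : ℝ) ≤ vT := by linarith
      nlinarith [mul_le_mul_of_nonneg_left hcut (by positivity : (0:ℝ) ≤ 4 * (m:ℝ)),
        mul_le_mul_of_nonneg_left hTm (by positivity : (0:ℝ) ≤ 4 * γ * vS)]
    · have hmin : min vS vT = vT := min_eq_right h
      rw [hmin] at hcut
      have hSm : (m : ℝ) ≤ vS := by linarith
      nlinarith [mul_le_mul_of_nonneg_left hcut (by positivity : (0:ℝ) ≤ 4 * (m:ℝ)),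
        mul_le_mul_of_nonneg_left hSm (by positivity : (0:ℝ) ≤ 4 * γ * vT)]
  · -- variance
    rw [hmean]
    simp only [sub_zero]
    have h1 : ∑ i, μ i * x i ^ 2
        = (t / s) ^ 2 * (∑ i ∈ S, μ i) + (s / t) ^ 2 * (∑ i ∈ Sᶜ, μ i) := by
      rw [← Finset.sum_add_sum_compl S (fun i => μ i * x i ^ 2)]
      congr 1
      · rw [Finset.mul_sum]
        apply Finset.sum_congr rfl; intro i hi
        simp only [hxdef, hi, if_true]; ring
      · rw [Finset.mul_sum]
        apply Finset.sum_congr rfl; intro i hi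
        simp only [hxdef, Finset.mem_compl.mp hi, if_false]; ring
    rw [h1, hμS, hμT, ← hsumv, ← hs2, ← ht2]
    field_simp
    ring
  · -- ℓ∞ bound
    intro i
    rw [hmean, sub_zero]
    have hbb : b * vT = b * (2 * m) - b * vS := by rw [← hsumv]; ring
    have hbb' : b * vS = b * (2 * m) - b * vT := by rw [← hsumv]; ring
    by_cases hi : i ∈ S
    · have hxi : x i = t / s := by simp only [hxdef, hi, if_true]; ring
      rw [hxi, div_pow, hs2, ht2, div_le_div_iff₀ hvSpos hb]
      nlinarith [hbb, hbalS]
    · have hxi : x i = -(s / t) := by simp only [hxdef, hi, if_false]; ring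
      rw [hxi, neg_pow, div_pow, hs2, ht2]
      have h2 : (-1 : ℝ) ^ 2 * (vS / vT) = vS / vT := by ring
      rw [h2, div_le_div_iff₀ hvTpos hb]
      nlinarith [hbb', hbalT]
end

section
/- Let x : V → ℝ satisfy x_i ≥ 0 for all i, and relabel the vertices so that x_1 ≥ x_2 ≥ … ≥ x_{z−1} > 0 and x_z = … = x_n = 0 for some z ≤ n. For i ∈ {1,…,z−1} let S_i = {1,…,i}. Suppose Σ_{{i,j}∈E} (x_i − x_j)² ≤ λ, vol(supp(x)) ≤ m (equivalently μ(supp(x)) ≤ 1/2), Σ_{i∈V} d_i x_i² ≤ 1, and for some fixed k ∈ {1,…,z−1} and σ > 0, Σ_{i=k}^{n} d_i x_i² ≥ σ. Then there exists h with k ≤ h ≤ z−1 such that φ(S_h) ≤ (1/σ)·√(2λ). -/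
open Finset

/-- The sweep set consisting of the first `h` vertices (in the label order of `Fin n`).
With 1-based paper indexing, `sweep h` is the paper's sweep cut `S_h = {1, …, h}`. -/
def sweep (n h : ℕ) : Finset (Fin n) := Finset.univ.filter (fun i => (i : ℕ) < h)

/-- Telescoping sum over an interval. -/
lemma telescope_Ico (w : ℕ → ℝ) {a b : ℕ} (hab : a ≤ b) :
    ∑ t ∈ Finset.Ico a b, (w t - w (t + 1)) = w a - w b := by
  induction b, hab using Nat.le_induction with
  | base => simp
  | succ b hab ih => rw [Finset.sum_Ico_succ_top hab, ih]; ring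

/-- **Lemma 3.1 (lem:cheeger).** A sweep-cut variant of Cheeger's inequality.
Vertices are relabeled so that (with 1-based paper indexing) `x_1 ≥ … ≥ x_{z-1} > 0` and
`x_z = … = x_n = 0`; in the `Fin n` (0-based) labels, the paper's vertex `p` is `p − 1`,
and the paper's sweep cut `S_h` is `sweep n h`.  If `∑_{{i,j}∈E}(x_i−x_j)² ≤ λ`,
`vol(supp(x)) ≤ m`, `∑ d_i x_i² ≤ 1`, and `∑_{i=k}^{n} d_i x_i² ≥ σ` for some
`1 ≤ k ≤ z−1` and `σ > 0`, then some sweep cut `S_h` with `k ≤ h ≤ z−1` has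
`φ(S_h) ≤ (1/σ)·√(2λ)`. -/
theorem sweep_cut_cheeger {n : ℕ} (G : SimpleGraph (Fin n)) [DecidableRel G.Adj]
    (m : ℕ) (hm : m = G.edgeFinset.card) (hm1 : 1 ≤ m)
    (hdeg : ∀ i, 0 < G.degree i)
    (x : Fin n → ℝ) (hx0 : ∀ i, 0 ≤ x i)
    (hsorted : ∀ i j : Fin n, i ≤ j → x j ≤ x i)
    (z : ℕ) (hz1 : 1 ≤ z) (hzn : z ≤ n)
    (hpos : ∀ i : Fin n, (i : ℕ) < z - 1 → 0 < x i)
    (hzero : ∀ i : Fin n, z - 1 ≤ (i : ℕ) → x i = 0)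
    (lam : ℝ) (hlam : edgeSum G (fun i j => (x i - x j) ^ 2) ≤ lam)
    (hsupp : vol G (Finset.univ.filter (fun i => x i ≠ 0)) ≤ m)
    (hnorm : ∑ i, (G.degree i : ℝ) * x i ^ 2 ≤ 1)
    (k : ℕ) (hk1 : 1 ≤ k) (hkz : k ≤ z - 1)
    (σ : ℝ) (hσ : 0 < σ)
    (htail : σ ≤ ∑ i ∈ Finset.univ.filter (fun i : Fin n => k - 1 ≤ (i : ℕ)),
      (G.degree i : ℝ) * x i ^ 2) :
    ∃ h : ℕ, k ≤ h ∧ h ≤ z - 1 ∧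
      conductance G (sweep n h) ≤ (1 / σ) * Real.sqrt (2 * lam) := by
  have hz2 : 2 ≤ z := by omega
  have hn0 : 0 < n := by omega
  -- the step function `w t = x t ^ 2` (extended by zero)
  set w : ℕ → ℝ := fun t => if ht : t < n then x ⟨t, ht⟩ ^ 2 else 0 with hw
  have hw_eq : ∀ i : Fin n, w (i : ℕ) = x i ^ 2 := by
    intro i; simp only [hw]; rw [dif_pos i.isLt]
  have hw_nonneg : ∀ t, 0 ≤ w t := by
    intro t
    by_cases ht : t < n
    · simp only [hw]; rw [dif_pos ht]; positivity
    · simp only [hw]; rw [dif_neg ht]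
  have hw_anti : ∀ s t : ℕ, s ≤ t → w t ≤ w s := by
    intro s t hst
    by_cases ht : t < n
    · have hs : s < n := lt_of_le_of_lt hst ht
      simp only [hw]; rw [dif_pos ht, dif_pos hs]
      exact pow_le_pow_left₀ (hx0 _) (hsorted ⟨s, hs⟩ ⟨t, ht⟩ hst) 2
    · have h0 : w t = 0 := by simp only [hw]; rw [dif_neg ht]
      rw [h0]; exact hw_nonneg s
  have hw_zero : ∀ t, z - 1 ≤ t → w t = 0 := by
    intro t htz
    by_cases ht : t < n
    · simp only [hw]; rw [dif_pos ht, hzero ⟨t, ht⟩ htz]; ring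
    · simp only [hw]; rw [dif_neg ht]
  -- volume facts
  have hvol_compl : ∀ S : Finset (Fin n), vol G S + vol G Sᶜ = 2 * m := by
    intro S
    have : vol G S + vol G Sᶜ = ∑ i, G.degree i := Finset.sum_add_sum_compl S _
    rw [this, G.sum_degrees_eq_twice_card_edges, hm]
  have hvol_le : ∀ h : ℕ, h ≤ z - 1 → vol G (sweep n h) ≤ m := by
    intro h hh
    refine le_trans (Finset.sum_le_sum_of_subset ?_) hsupp
    intro i hi
    simp only [sweep, Finset.mem_filter, Finset.mem_univ, true_and] at hi ⊢
    exact ne_of_gt (hpos i (lt_of_lt_of_le hi hh))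
  have hvol_pos : ∀ h : ℕ, 1 ≤ h → 0 < vol G (sweep n h) := by
    intro h hh
    have hmem : (⟨0, hn0⟩ : Fin n) ∈ sweep n h := by
      simp only [sweep, Finset.mem_filter, Finset.mem_univ, true_and]; omega
    rw [vol]
    exact lt_of_lt_of_le (hdeg _)
      (Finset.single_le_sum (f := fun i => G.degree i) (fun i _ => Nat.zero_le _) hmem)
  have hcut_eq : ∀ h : ℕ, 1 ≤ h → h ≤ z - 1 →
      (cutSize G (sweep n h) : ℝ) = conductance G (sweep n h) * (vol G (sweep n h) : ℝ) := by
    intro h h1 h2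
    have hv : (0:ℝ) < (vol G (sweep n h) : ℝ) := by exact_mod_cast hvol_pos h h1
    have hmin : min ((vol G (sweep n h) : ℝ)) ((vol G (sweep n h)ᶜ : ℝ))
        = (vol G (sweep n h) : ℝ) := by
      have h1' := hvol_le h h2
      have h2' := hvol_compl (sweep n h)
      have : vol G (sweep n h) ≤ vol G (sweep n h)ᶜ := by omega
      exact min_eq_left (by exact_mod_cast this)
    rw [conductance, hmin, div_mul_cancel₀ _ (ne_of_gt hv)]
  -- choose the sweep cut of minimal conductance
  obtain ⟨h₀, hh₀mem, hh₀min⟩ := Finset.exists_min_image (Finset.Icc k (z-1))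
    (fun h => conductance G (sweep n h)) ⟨k, Finset.mem_Icc.mpr ⟨le_refl k, hkz⟩⟩
  rw [Finset.mem_Icc] at hh₀mem
  have hφ0 : 0 ≤ conductance G (sweep n h₀) := by
    unfold conductance
    exact div_nonneg (Nat.cast_nonneg _) (le_min (Nat.cast_nonneg _) (Nat.cast_nonneg _))
  -- volume as an indicator sum
  have hvol_sum : ∀ t : ℕ, (vol G (sweep n (t+1)) : ℝ)
      = ∑ i : Fin n, if (i:ℕ) ≤ t then (G.degree i : ℝ) else 0 := by
    intro t
    rw [vol, sweep]
    push_cast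
    rw [Finset.sum_filter]
    refine Finset.sum_congr rfl fun i _ => ?_
    simp [Nat.lt_succ_iff]
  -- cut size as an indicator sum
  have hcut_sum : ∀ t : ℕ, (cutSize G (sweep n (t+1)) : ℝ)
      = ∑ i : Fin n, ∑ j : Fin n,
          if G.Adj i j ∧ (i:ℕ) ≤ t ∧ t < (j:ℕ) then (1:ℝ) else 0 := by
    intro t
    rw [cutSize, sweep]
    push_cast
    rw [Finset.sum_filter]
    refine Finset.sum_congr rfl fun i _ => ?_
    by_cases hi : (i:ℕ) < t + 1
    · rw [if_pos hi, Finset.compl_filter, Finset.sum_filter]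
      refine Finset.sum_congr rfl fun j _ => ?_
      have hi' : (i:ℕ) ≤ t := Nat.lt_succ_iff.mp hi
      by_cases hj : (j:ℕ) < t + 1
      · rw [if_neg (not_not_intro hj), if_neg (by rintro ⟨-, -, h⟩; omega)]
      · rw [if_pos hj]
        have ht' : t < (j:ℕ) := by omega
        by_cases ha : G.Adj i j
        · rw [if_pos ha, if_pos ⟨ha, hi', ht'⟩]
        · rw [if_neg ha, if_neg (fun h => ha h.1)]
    · rw [if_neg hi]
      symm
      refine Finset.sum_eq_zero fun j _ => ?_
      rw [if_neg (by rintro ⟨-, h, -⟩; omega)]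
  -- (B) the Abel-summation identity
  have hB : ∑ t ∈ Finset.Ico (k-1) (z-1), (vol G (sweep n (t+1)) : ℝ) * (w t - w (t+1))
      = ∑ i : Fin n, (G.degree i : ℝ) * w (max (i:ℕ) (k-1)) := by
    calc ∑ t ∈ Finset.Ico (k-1) (z-1), (vol G (sweep n (t+1)) : ℝ) * (w t - w (t+1))
        = ∑ t ∈ Finset.Ico (k-1) (z-1), ∑ i : Fin n,
            (if (i:ℕ) ≤ t then (G.degree i : ℝ) * (w t - w (t+1)) else 0) := by
          refine Finset.sum_congr rfl fun t _ => ?_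
          rw [hvol_sum t, Finset.sum_mul]
          exact Finset.sum_congr rfl fun i _ => by rw [ite_mul, zero_mul]
      _ = ∑ i : Fin n, ∑ t ∈ Finset.Ico (k-1) (z-1),
            (if (i:ℕ) ≤ t then (G.degree i : ℝ) * (w t - w (t+1)) else 0) :=
          Finset.sum_comm
      _ = ∑ i : Fin n, (G.degree i : ℝ) * w (max (i:ℕ) (k-1)) := by
          refine Finset.sum_congr rfl fun i _ => ?_
          rw [← Finset.sum_filter]
          have hfil : (Finset.Ico (k-1) (z-1)).filter (fun t => (i:ℕ) ≤ t)
              = Finset.Ico (max (i:ℕ) (k-1)) (z-1) := by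
            ext t
            simp only [Finset.mem_filter, Finset.mem_Ico, max_le_iff]
            omega
          rw [hfil, ← Finset.mul_sum]
          by_cases hM : max (i:ℕ) (k-1) ≤ z - 1
          · rw [telescope_Ico w hM, hw_zero (z-1) (le_refl _), sub_zero]
          · rw [Finset.Ico_eq_empty (by omega), Finset.sum_empty,
              hw_zero _ (by omega), mul_zero]
  have hσB : σ ≤ ∑ t ∈ Finset.Ico (k-1) (z-1),
      (vol G (sweep n (t+1)) : ℝ) * (w t - w (t+1)) := by
    rw [hB]
    refine le_trans htail ?_
    rw [Finset.sum_filter]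
    refine Finset.sum_le_sum fun i _ => ?_
    by_cases hi : k - 1 ≤ (i:ℕ)
    · rw [if_pos hi, max_eq_left hi, hw_eq]
    · rw [if_neg hi]
      exact mul_nonneg (Nat.cast_nonneg _) (hw_nonneg _)
  -- (C) bounding the sweep sum by the edge sum
  set A : ℝ := ∑ i : Fin n, ∑ j : Fin n,
      (if G.Adj i j ∧ (i:ℕ) < (j:ℕ) then w (i:ℕ) - w (j:ℕ) else 0) with hA
  have hpair : ∀ i j : Fin n,
      (∑ t ∈ Finset.Ico (k-1) (z-1),
        if G.Adj i j ∧ (i:ℕ) ≤ t ∧ t < (j:ℕ) then (w t - w (t+1)) else 0)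
      ≤ (if G.Adj i j ∧ (i:ℕ) < (j:ℕ) then w (i:ℕ) - w (j:ℕ) else 0) := by
    intro i j
    by_cases ha : G.Adj i j
    · by_cases hij : (i:ℕ) < (j:ℕ)
      · rw [if_pos ⟨ha, hij⟩, ← Finset.sum_filter]
        have hfil : (Finset.Ico (k-1) (z-1)).filter
            (fun t => G.Adj i j ∧ (i:ℕ) ≤ t ∧ t < (j:ℕ))
            = Finset.Ico (max (i:ℕ) (k-1)) (min (j:ℕ) (z-1)) := by
          ext t
          simp only [Finset.mem_filter, Finset.mem_Ico, max_le_iff, lt_min_iff, ha, true_and]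
          omega
        rw [hfil]
        by_cases hM : max (i:ℕ) (k-1) ≤ min (j:ℕ) (z-1)
        · rw [telescope_Ico w hM]
          have h1 : w (max (i:ℕ) (k-1)) ≤ w (i:ℕ) := hw_anti _ _ (le_max_left _ _)
          have h2 : w (j:ℕ) ≤ w (min (j:ℕ) (z-1)) := hw_anti _ _ (min_le_left _ _)
          linarith
        · rw [Finset.Ico_eq_empty (by omega), Finset.sum_empty]
          have : w (j:ℕ) ≤ w (i:ℕ) := hw_anti _ _ (le_of_lt hij)
          linarith
      · rw [if_neg (fun h => hij h.2)]
        refine le_of_eq (Finset.sum_eq_zero fun t _ => ?_)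
        rw [if_neg (by rintro ⟨-, h1, h2⟩; omega)]
    · rw [if_neg (fun h => ha h.1)]
      refine le_of_eq (Finset.sum_eq_zero fun t _ => ?_)
      rw [if_neg (fun h => ha h.1)]
  have hC : ∑ t ∈ Finset.Ico (k-1) (z-1),
      (cutSize G (sweep n (t+1)) : ℝ) * (w t - w (t+1)) ≤ A := by
    calc ∑ t ∈ Finset.Ico (k-1) (z-1), (cutSize G (sweep n (t+1)) : ℝ) * (w t - w (t+1))
        = ∑ t ∈ Finset.Ico (k-1) (z-1), ∑ i : Fin n, ∑ j : Fin n,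
            (if G.Adj i j ∧ (i:ℕ) ≤ t ∧ t < (j:ℕ) then (w t - w (t+1)) else 0) := by
          refine Finset.sum_congr rfl fun t _ => ?_
          rw [hcut_sum t, Finset.sum_mul]
          refine Finset.sum_congr rfl fun i _ => ?_
          rw [Finset.sum_mul]
          exact Finset.sum_congr rfl fun j _ => by rw [ite_mul, one_mul, zero_mul]
      _ = ∑ i : Fin n, ∑ j : Fin n, ∑ t ∈ Finset.Ico (k-1) (z-1),
            (if G.Adj i j ∧ (i:ℕ) ≤ t ∧ t < (j:ℕ) then (w t - w (t+1)) else 0) := by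
          rw [Finset.sum_comm]
          exact Finset.sum_congr rfl fun i _ => Finset.sum_comm
      _ ≤ A := by
          rw [hA]
          exact Finset.sum_le_sum fun i _ => Finset.sum_le_sum fun j _ => hpair i j
  -- (A) bounding the edge sum via Cauchy–Schwarz
  have hlam0 : 0 ≤ lam := by
    refine le_trans ?_ hlam
    rw [edgeSum]
    apply div_nonneg _ (by norm_num)
    refine Finset.sum_nonneg fun i _ => Finset.sum_nonneg fun j _ => ?_
    split_ifs
    · positivity
    · exact le_refl _
  -- Cauchy–Schwarz on the product type
  set F : Fin n × Fin n → ℝ := fun p => if G.Adj p.1 p.2 then |x p.1 - x p.2| else 0 with hF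
  set Gg : Fin n × Fin n → ℝ := fun p => if G.Adj p.1 p.2 then x p.1 + x p.2 else 0 with hGg
  have hF2 : ∑ p : Fin n × Fin n, F p ^ 2 ≤ 2 * lam := by
    have : ∑ p : Fin n × Fin n, F p ^ 2
        = ∑ i : Fin n, ∑ j : Fin n, (if G.Adj i j then (x i - x j) ^ 2 else 0) := by
      rw [← Finset.univ_product_univ, Finset.sum_product]
      refine Finset.sum_congr rfl fun i _ => Finset.sum_congr rfl fun j _ => ?_
      simp only [hF]
      split_ifs
      · rw [sq_abs]
      · ring
    rw [this]
    have h2 : ∑ i : Fin n, ∑ j : Fin n, (if G.Adj i j then (x i - x j) ^ 2 else 0)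
        = 2 * edgeSum G (fun i j => (x i - x j) ^ 2) := by
      rw [edgeSum]; ring
    rw [h2]
    linarith
  have hdeg_sum : ∀ i : Fin n, ∑ j : Fin n, (if G.Adj i j then (1:ℝ) else 0)
      = (G.degree i : ℝ) := by
    intro i
    rw [Finset.sum_boole, SimpleGraph.degree]
    congr 1
    rw [SimpleGraph.neighborFinset_eq_filter]
  have hGg2 : ∑ p : Fin n × Fin n, Gg p ^ 2 ≤ 4 := by
    have hstep : ∑ p : Fin n × Fin n, Gg p ^ 2
        ≤ ∑ i : Fin n, ∑ j : Fin n,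
          (if G.Adj i j then 2 * x i ^ 2 + 2 * x j ^ 2 else 0) := by
      rw [← Finset.univ_product_univ, Finset.sum_product]
      refine Finset.sum_le_sum fun i _ => Finset.sum_le_sum fun j _ => ?_
      simp only [hGg]
      split_ifs
      · nlinarith [sq_nonneg (x i - x j)]
      · simp
    refine le_trans hstep ?_
    have hsplit : ∑ i : Fin n, ∑ j : Fin n,
        (if G.Adj i j then 2 * x i ^ 2 + 2 * x j ^ 2 else 0)
        = 2 * (∑ i : Fin n, ∑ j : Fin n, (if G.Adj i j then x i ^ 2 else 0))
          + 2 * (∑ i : Fin n, ∑ j : Fin n, (if G.Adj i j then x j ^ 2 else 0)) := by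
      rw [Finset.mul_sum, Finset.mul_sum, ← Finset.sum_add_distrib]
      refine Finset.sum_congr rfl fun i _ => ?_
      rw [Finset.mul_sum, Finset.mul_sum, ← Finset.sum_add_distrib]
      refine Finset.sum_congr rfl fun j _ => ?_
      split_ifs
      · ring
      · ring
    have hfirst : ∑ i : Fin n, ∑ j : Fin n, (if G.Adj i j then x i ^ 2 else 0)
        = ∑ i : Fin n, (G.degree i : ℝ) * x i ^ 2 := by
      refine Finset.sum_congr rfl fun i _ => ?_
      rw [← hdeg_sum i, Finset.sum_mul]
      refine Finset.sum_congr rfl fun j _ => ?_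
      split_ifs
      · ring
      · ring
    have hsecond : ∑ i : Fin n, ∑ j : Fin n, (if G.Adj i j then x j ^ 2 else 0)
        = ∑ i : Fin n, (G.degree i : ℝ) * x i ^ 2 := by
      rw [Finset.sum_comm]
      rw [← hfirst]
      refine Finset.sum_congr rfl fun j _ => Finset.sum_congr rfl fun i _ => ?_
      exact if_congr (G.adj_comm i j) rfl rfl
    rw [hsplit, hfirst, hsecond]
    linarith
  have hS1 : 2 * A = ∑ p : Fin n × Fin n, F p * Gg p := by
    have hsymm : A = ∑ i : Fin n, ∑ j : Fin n,
        (if G.Adj i j ∧ (j:ℕ) < (i:ℕ) then w (j:ℕ) - w (i:ℕ) else 0) := by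
      rw [hA, Finset.sum_comm]
      refine Finset.sum_congr rfl fun i _ => Finset.sum_congr rfl fun j _ => ?_
      exact if_congr (by rw [G.adj_comm]) rfl rfl
    have hprod : ∑ p : Fin n × Fin n, F p * Gg p
        = ∑ i : Fin n, ∑ j : Fin n,
          (if G.Adj i j then |x i - x j| * (x i + x j) else 0) := by
      rw [← Finset.univ_product_univ, Finset.sum_product]
      refine Finset.sum_congr rfl fun i _ => Finset.sum_congr rfl fun j _ => ?_
      simp only [hF, hGg]
      split_ifs
      · rfl
      · ring
    rw [hprod, two_mul]
    nth_rewrite 2 [hsymm]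
    rw [hA, ← Finset.sum_add_distrib]
    refine Finset.sum_congr rfl fun i _ => ?_
    rw [← Finset.sum_add_distrib]
    refine Finset.sum_congr rfl fun j _ => ?_
    by_cases ha : G.Adj i j
    · have hne : (i:ℕ) ≠ (j:ℕ) := fun h => G.ne_of_adj ha (Fin.ext h)
      rcases lt_or_gt_of_ne hne with hij | hij
      · rw [if_pos ⟨ha, hij⟩, if_neg (by rintro ⟨-, h⟩; omega), if_pos ha, add_zero]
        rw [hw_eq, hw_eq]
        have hxle : x j ≤ x i := hsorted i j (by rw [Fin.le_def]; omega)
        rw [abs_of_nonneg (by linarith)]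
        ring
      · rw [if_neg (by rintro ⟨-, h⟩; omega), if_pos ⟨ha, hij⟩, if_pos ha, zero_add]
        rw [hw_eq, hw_eq]
        have hxle : x i ≤ x j := hsorted j i (by rw [Fin.le_def]; omega)
        rw [abs_of_nonpos (by linarith)]
        ring
    · rw [if_neg (fun h => ha h.1), if_neg (fun h => ha h.1), if_neg ha, add_zero]
  have hA_le : A ≤ Real.sqrt (2 * lam) := by
    have hFnn : ∀ p : Fin n × Fin n, 0 ≤ F p := by
      intro p; simp only [hF]; split_ifs
      · exact abs_nonneg _
      · exact le_refl 0
    have hGnn : ∀ p : Fin n × Fin n, 0 ≤ Gg p := by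
      intro p; simp only [hGg]; split_ifs
      · exact add_nonneg (hx0 _) (hx0 _)
      · exact le_refl 0
    have hS1nn : 0 ≤ ∑ p : Fin n × Fin n, F p * Gg p :=
      Finset.sum_nonneg fun p _ => mul_nonneg (hFnn p) (hGnn p)
    have hcs := Finset.sum_mul_sq_le_sq_mul_sq Finset.univ F Gg
    have hsq : (∑ p : Fin n × Fin n, F p * Gg p) ^ 2 ≤ 2 * lam * 4 := by
      refine le_trans hcs ?_
      have h4 : (0:ℝ) ≤ ∑ p : Fin n × Fin n, Gg p ^ 2 :=
        Finset.sum_nonneg fun p _ => sq_nonneg _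
      have h5 : (0:ℝ) ≤ ∑ p : Fin n × Fin n, F p ^ 2 :=
        Finset.sum_nonneg fun p _ => sq_nonneg _
      nlinarith
    have hsqrt : ∑ p : Fin n × Fin n, F p * Gg p ≤ Real.sqrt (2 * lam * 4) := by
      have := Real.sqrt_le_sqrt hsq
      rwa [Real.sqrt_sq hS1nn] at this
    have h24 : Real.sqrt (2 * lam * 4) = 2 * Real.sqrt (2 * lam) := by
      rw [show (2 * lam * 4 : ℝ) = 2 ^ 2 * (2 * lam) by ring, Real.sqrt_mul (by positivity),
        Real.sqrt_sq (by norm_num)]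
    have : 2 * A ≤ 2 * Real.sqrt (2 * lam) := by
      rw [hS1]
      rw [h24] at hsqrt
      exact hsqrt
    linarith
  -- assembling the chain
  have hchain : conductance G (sweep n h₀) * σ ≤ Real.sqrt (2 * lam) := by
    have step1 : conductance G (sweep n h₀) * σ
        ≤ ∑ t ∈ Finset.Ico (k-1) (z-1),
            (cutSize G (sweep n (t+1)) : ℝ) * (w t - w (t+1)) := by
      calc conductance G (sweep n h₀) * σ
          ≤ conductance G (sweep n h₀) * (∑ t ∈ Finset.Ico (k-1) (z-1),
              (vol G (sweep n (t+1)) : ℝ) * (w t - w (t+1))) :=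
            mul_le_mul_of_nonneg_left hσB hφ0
        _ = ∑ t ∈ Finset.Ico (k-1) (z-1), conductance G (sweep n h₀)
              * ((vol G (sweep n (t+1)) : ℝ) * (w t - w (t+1))) := Finset.mul_sum _ _ _
        _ ≤ ∑ t ∈ Finset.Ico (k-1) (z-1),
              (cutSize G (sweep n (t+1)) : ℝ) * (w t - w (t+1)) := by
            refine Finset.sum_le_sum fun t ht => ?_
            rw [Finset.mem_Ico] at ht
            have ht1 : 1 ≤ t + 1 := by omega
            have ht2 : t + 1 ≤ z - 1 := by omega
            have hmem : t + 1 ∈ Finset.Icc k (z-1) := Finset.mem_Icc.mpr ⟨by omega, ht2⟩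
            have hφle := hh₀min (t+1) hmem
            have hΔ : 0 ≤ w t - w (t+1) := sub_nonneg.mpr (hw_anti t (t+1) (Nat.le_succ t))
            have hV : (0:ℝ) ≤ (vol G (sweep n (t+1)) : ℝ) := Nat.cast_nonneg _
            have hmul : conductance G (sweep n h₀) * (vol G (sweep n (t+1)) : ℝ)
                ≤ conductance G (sweep n (t+1)) * (vol G (sweep n (t+1)) : ℝ) :=
              mul_le_mul_of_nonneg_right hφle hV
            calc conductance G (sweep n h₀) * ((vol G (sweep n (t+1)) : ℝ) * (w t - w (t+1)))
                = (conductance G (sweep n h₀) * (vol G (sweep n (t+1)) : ℝ)) * (w t - w (t+1)) := by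
                  ring
              _ ≤ (conductance G (sweep n (t+1)) * (vol G (sweep n (t+1)) : ℝ)) * (w t - w (t+1)) :=
                  mul_le_mul_of_nonneg_right hmul hΔ
              _ = (cutSize G (sweep n (t+1)) : ℝ) * (w t - w (t+1)) := by
                  rw [← hcut_eq (t+1) ht1 ht2]
    exact le_trans step1 (le_trans hC hA_le)
  refine ⟨h₀, hh₀mem.1, hh₀mem.2, ?_⟩
  have hfin := (le_div_iff₀ hσ).mpr hchain
  calc conductance G (sweep n h₀) ≤ Real.sqrt (2 * lam) / σ := hfin
    _ = (1 / σ) * Real.sqrt (2 * lam) := by ring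
end

section
/- Let n ≥ 2, let D = diag(d_1, …, d_n) with all d_i > 0 and Σ_i d_i = 2m, let μ_i = d_i/(2m), L(K_V) = diag(μ) − μμᵀ, and 𝓘 = I_n − (1/(2m))·D^{1/2} 1 1ᵀ D^{1/2}. For ε > 0 and any symmetric matrix M ∈ ℝ^{n×n}, define U_ε(M) = 2m · D^{−1/2} exp(−2mε · D^{−1/2} M D^{−1/2}) D^{−1/2} / (𝓘 • exp(−2mε · D^{−1/2} M D^{−1/2})). Then the denominator 𝓘 • exp(−2mε·D^{−1/2} M D^{−1/2}) is strictly positive, U_ε(M) is positive semidefinite, and L(K_V) • U_ε(M) = 1. -/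
open Finset Matrix

/-- The trace inner product `A • B = Tr(AᵀB)` of two square matrices. -/
noncomputable def frobDot {n : ℕ} (A B : Matrix (Fin n) (Fin n) ℝ) : ℝ :=
  (Aᵀ * B).trace

/-- A nonnegative scalar multiple of a PSD real matrix is PSD. -/
lemma posSemidef_smul_nonneg {n : ℕ} {X : Matrix (Fin n) (Fin n) ℝ}
    (hX : X.PosSemidef) {c : ℝ} (hc : 0 ≤ c) : (c • X).PosSemidef := by
  constructor
  · rw [Matrix.IsHermitian, Matrix.conjTranspose_smul, hX.1.eq, star_trivial]
  · intro x
    have := hX.2 x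
    rw [show (x.sum fun i xi => x.sum fun j xj => star xi * (c • X) i j * xj) =
        c * (x.sum fun i xi => x.sum fun j xj => star xi * X i j * xj) from by
      simp only [Finsupp.sum, Finset.mul_sum, Matrix.smul_apply, smul_eq_mul]
      exact Finset.sum_congr rfl fun i _ => Finset.sum_congr rfl fun j _ => by ring]
    exact mul_nonneg hc this

/-- **Lemma 2.2 (lem:delta).** With `D = diag(d)` (`d_i > 0`, `∑ d_i = 2m`),
`μ_i = d_i/(2m)`, `L(K_V) = diag(μ) − μμᵀ`, and `𝓘 = I − (1/(2m))·D^{1/2}11ᵀD^{1/2}`,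
for any `ε > 0` and symmetric `M`, the normalized matrix-exponential update
`U_ε(M) = 2m · D^{−1/2} exp(−2mε·D^{−1/2}MD^{−1/2}) D^{−1/2} / (𝓘 • exp(−2mε·D^{−1/2}MD^{−1/2}))`
has strictly positive denominator, is positive semidefinite, and satisfies
`L(K_V) • U_ε(M) = 1`; i.e. `U_ε(M) ∈ Δ`. -/
theorem update_in_Delta {n : ℕ} (hn : 2 ≤ n)
    (d : Fin n → ℝ) (hd : ∀ i, 0 < d i)
    (m : ℝ) (hm : ∑ i, d i = 2 * m)
    (μ : Fin n → ℝ) (hμ : ∀ i, μ i = d i / (2 * m))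
    (LKV : Matrix (Fin n) (Fin n) ℝ)
    (hLKV : LKV = Matrix.diagonal μ - Matrix.vecMulVec μ μ)
    (Iproj : Matrix (Fin n) (Fin n) ℝ)
    (hIproj : Iproj = 1 - (1 / (2 * m)) •
      Matrix.vecMulVec (fun i => Real.sqrt (d i)) (fun i => Real.sqrt (d i)))
    (Dinvhalf : Matrix (Fin n) (Fin n) ℝ)
    (hDinvhalf : Dinvhalf = Matrix.diagonal (fun i => (Real.sqrt (d i))⁻¹))
    (ε : ℝ) (hε : 0 < ε)
    (M : Matrix (Fin n) (Fin n) ℝ) (hMsym : M.IsSymm)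
    (A : Matrix (Fin n) (Fin n) ℝ)
    (hA : A = NormedSpace.exp (-((2 * m * ε) • (Dinvhalf * M * Dinvhalf))))
    (U : Matrix (Fin n) (Fin n) ℝ)
    (hU : U = ((2 * m) / frobDot Iproj A) • (Dinvhalf * A * Dinvhalf)) :
    0 < frobDot Iproj A ∧ U.PosSemidef ∧ frobDot LKV U = 1 := by
  classical
  -- positivity of m
  have hmpos : 0 < m := by
    have h0 : 0 < ∑ i, d i :=
      Finset.sum_pos (fun i _ => hd i) ⟨⟨0, by omega⟩, Finset.mem_univ _⟩
    rw [hm] at h0; linarith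
  set v : Fin n → ℝ := fun i => Real.sqrt (d i) with hv
  have hvpos : ∀ i, 0 < v i := fun i => Real.sqrt_pos.mpr (hd i)
  have hvsq : ∀ i, v i * v i = d i := fun i => Real.mul_self_sqrt (hd i).le
  set Dv : Matrix (Fin n) (Fin n) ℝ := Matrix.diagonal v with hDv
  have hDvDinv : Dv * Dinvhalf = 1 := by
    rw [hDv, hDinvhalf, Matrix.diagonal_mul_diagonal]
    rw [show (fun i => v i * (Real.sqrt (d i))⁻¹) = fun _ => (1 : ℝ) from
      funext fun i => mul_inv_cancel₀ (hvpos i).ne', Matrix.diagonal_one]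
  have hDinvDv : Dinvhalf * Dv = 1 := by
    rw [hDv, hDinvhalf, Matrix.diagonal_mul_diagonal]
    rw [show (fun i => (Real.sqrt (d i))⁻¹ * v i) = fun _ => (1 : ℝ) from
      funext fun i => inv_mul_cancel₀ (hvpos i).ne', Matrix.diagonal_one]
  have hDinvT : Dinvhalfᵀ = Dinvhalf := by rw [hDinvhalf, Matrix.diagonal_transpose]
  -- symmetry and idempotence of Iproj
  have hPsym : Iprojᵀ = Iproj := by
    rw [hIproj]
    ext i j
    simp only [Matrix.transpose_apply, Matrix.sub_apply, Matrix.smul_apply,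
      Matrix.vecMulVec_apply, smul_eq_mul]
    congr 1
    · simp [Matrix.one_apply, eq_comm]
    · ring
  set V : Matrix (Fin n) (Fin n) ℝ := Matrix.vecMulVec v v with hVdef
  have hVV : V * V = (2 * m) • V := by
    ext i j
    simp only [hVdef, Matrix.mul_apply, Matrix.vecMulVec_apply, Matrix.smul_apply,
      smul_eq_mul]
    calc ∑ k, v i * v k * (v k * v j) = (∑ k, v k * v k) * (v i * v j) := by
          rw [Finset.sum_mul]; exact Finset.sum_congr rfl fun k _ => by ring
      _ = 2 * m * (v i * v j) := by
          rw [show (∑ k, v k * v k) = ∑ k, d k from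
            Finset.sum_congr rfl fun k _ => hvsq k, hm]
  have hPP : Iproj * Iproj = Iproj := by
    have key : ((1 / (2 * m)) • V) * ((1 / (2 * m)) • V) = (1 / (2 * m)) • V := by
      rw [Matrix.smul_mul, Matrix.mul_smul, hVV, smul_smul, smul_smul]
      congr 1
      field_simp
    rw [hIproj, sub_mul, one_mul, mul_sub, mul_one, key]
    abel
  -- the exponential: A = E * E with E symmetric invertible
  set S : Matrix (Fin n) (Fin n) ℝ :=
    -((2 * m * ε) • (Dinvhalf * M * Dinvhalf)) with hS
  have hSsym : Sᵀ = S := by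
    rw [hS, Matrix.transpose_neg, Matrix.transpose_smul, Matrix.transpose_mul,
      Matrix.transpose_mul, hDinvT, hMsym.eq]
    ring_nf
    rw [Matrix.mul_assoc]
  have hAsym : Aᵀ = A := by rw [hA, ← Matrix.exp_transpose, hSsym]
  set E : Matrix (Fin n) (Fin n) ℝ := NormedSpace.exp ((2⁻¹ : ℝ) • S) with hE
  have hEE : E * E = A := by
    rw [hA, hE, ← Matrix.exp_add_of_commute _ _ (Commute.refl _), ← add_smul]
    norm_num
  have hEsym : Eᵀ = E := by
    rw [hE, ← Matrix.exp_transpose, Matrix.transpose_smul, hSsym]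
  have hEinv : E * NormedSpace.exp (-((2⁻¹ : ℝ) • S)) = 1 := by
    rw [hE, ← Matrix.exp_add_of_commute ((2⁻¹ : ℝ) • S) (-((2⁻¹ : ℝ) • S)) (Commute.neg_right (Commute.refl _)),
      add_neg_cancel, NormedSpace.exp_zero]
  have hEH : Eᴴ = E := by
    rw [Matrix.conjTranspose_eq_transpose_of_trivial, hEsym]
  have hApsd : A.PosSemidef := by
    have := Matrix.posSemidef_self_mul_conjTranspose E
    rwa [hEH, hEE] at this
  -- trace of Iproj is n - 1 ≠ 0
  have htraceV : V.trace = 2 * m := by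
    rw [show V.trace = ∑ i, v i * v i from rfl,
      Finset.sum_congr rfl fun k _ => hvsq k, hm]
  have htraceP : Iproj.trace = (n : ℝ) - 1 := by
    rw [hIproj, Matrix.trace_sub, Matrix.trace_smul, Matrix.trace_one, htraceV]
    simp only [smul_eq_mul, Fintype.card_fin]
    field_simp
  have hPne : Iproj ≠ 0 := by
    intro h
    rw [h, Matrix.trace_zero] at htraceP
    have : (2 : ℝ) ≤ (n : ℝ) := by exact_mod_cast hn
    linarith
  -- N = Iproj * E is nonzero
  set N : Matrix (Fin n) (Fin n) ℝ := Iproj * E with hN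
  have hNne : N ≠ 0 := by
    intro h0
    apply hPne
    have : N * NormedSpace.exp (-((2⁻¹ : ℝ) • S)) = Iproj := by
      rw [hN, Matrix.mul_assoc, hEinv, Matrix.mul_one]
    rw [h0, Matrix.zero_mul] at this
    exact this.symm
  -- the denominator equals trace (N * Nᵀ), a positive sum of squares
  have hfrob : frobDot Iproj A = (N * Nᵀ).trace := by
    rw [frobDot, hPsym, hN, Matrix.transpose_mul, hEsym]
    rw [show Iproj * E * (E * Iprojᵀ) = Iproj * A * Iprojᵀ by
      rw [← hEE]; simp only [Matrix.mul_assoc]]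
    rw [hPsym, Matrix.trace_mul_cycle, hPP]
  have hsumsq : (N * Nᵀ).trace = ∑ i, ∑ j, (N i j) ^ 2 := by
    simp [Matrix.trace, Matrix.diag, Matrix.mul_apply, sq]
  have htpos : 0 < frobDot Iproj A := by
    rw [hfrob, hsumsq]
    obtain ⟨i, j, hij⟩ : ∃ i j, N i j ≠ 0 := by
      by_contra h
      push_neg at h
      exact hNne (Matrix.ext fun i j => h i j)
    refine Finset.sum_pos' (fun i _ => Finset.sum_nonneg fun j _ => sq_nonneg _)
      ⟨i, Finset.mem_univ _, Finset.sum_pos' (fun j _ => sq_nonneg _)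
        ⟨j, Finset.mem_univ _, lt_of_le_of_ne (sq_nonneg _)
          (Ne.symm (pow_ne_zero 2 hij))⟩⟩
  refine ⟨htpos, ?_, ?_⟩
  -- U is positive semidefinite
  · rw [hU]
    apply posSemidef_smul_nonneg
    · have := hApsd.mul_mul_conjTranspose_same Dinvhalf
      rwa [Matrix.conjTranspose_eq_transpose_of_trivial, hDinvT] at this
    · exact div_nonneg (by linarith) htpos.le
  -- the trace constraint
  · have hLfact : LKV = (1 / (2 * m)) • (Dv * Iproj * Dv) := by
      rw [hLKV, hIproj]
      ext i j
      have h2m : (2 * m) ≠ 0 := by positivity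
      simp only [Matrix.sub_apply, Matrix.smul_apply, hVdef, Matrix.vecMulVec_apply,
        smul_eq_mul, hDv, Matrix.diagonal_mul, Matrix.mul_diagonal,
        Matrix.diagonal_apply, Matrix.one_apply, hμ]
      by_cases h : i = j
      · subst h
        simp only [if_pos rfl, ↓reduceIte]
        rw [← hvsq i]
        field_simp
      · simp only [if_neg h]
        rw [← hvsq i, ← hvsq j]
        field_simp
        ring
    have hLT : LKVᵀ = LKV := by
      rw [hLfact, Matrix.transpose_smul, Matrix.transpose_mul, Matrix.transpose_mul,
        hPsym, hDv, Matrix.diagonal_transpose, Matrix.mul_assoc]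
    have hprod : (Dv * Iproj * Dv) * (Dinvhalf * A * Dinvhalf)
        = Dv * (Iproj * A) * Dinvhalf := by
      calc (Dv * Iproj * Dv) * (Dinvhalf * A * Dinvhalf)
          = Dv * Iproj * (Dv * Dinvhalf) * (A * Dinvhalf) := by
            simp only [Matrix.mul_assoc]
        _ = Dv * (Iproj * A) * Dinvhalf := by
            rw [hDvDinv, Matrix.mul_one]; simp only [Matrix.mul_assoc]
    have htrace2 : (Dv * (Iproj * A) * Dinvhalf).trace = frobDot Iproj A := by
      rw [Matrix.trace_mul_cycle, ← Matrix.mul_assoc, hDinvDv, Matrix.one_mul,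
        frobDot, hPsym]
    rw [frobDot, hLT, hLfact, hU, Matrix.smul_mul, Matrix.mul_smul, hprod,
      Matrix.trace_smul, Matrix.trace_smul, smul_eq_mul, smul_eq_mul, htrace2]
    field_simp
end

section
/- Let γ > 0, let S ⊆ V with μ(S) ≤ 1/8, let α ≥ (7/8)·γ, and let β : V → ℝ satisfy 0 ≤ β_i ≤ γ·μ_i for all i ∈ V and β_i = 0 for all i ∉ S. Suppose that for every x : V → ℝ, with x̄ = Σ_{i∈V} μ_i x_i, one has (1/m)·Σ_{{i,j}∈E} (x_i − x_j)² + Σ_{i∈V} β_i (x_i − x̄)² − α·Σ_{i∈V} μ_i (x_i − x̄)² ≥ 0. Then every nonempty C ⊊ V with μ(C) ≤ 1/2 and φ(C) ≤ γ/16 satisfies μ(S ∩ C) ≥ (1/2)·μ(C). -/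
open Finset

/-- Total `μ`-measure of a vertex subset, where `μ_i = d_i/(2m)`. -/
noncomputable def μvol {n : ℕ} (G : SimpleGraph (Fin n)) [DecidableRel G.Adj]
    (m : ℕ) (S : Finset (Fin n)) : ℝ :=
  ∑ i ∈ S, (G.degree i : ℝ) / (2 * m)

set_option maxHeartbeats 1600000 in
/-- **Key step in the proof of the Main Theorem (Theorem 1.2).** A feasible dual
certificate `M(α,β) ⪰ 0` (expressed as nonnegativity of the quadratic form
`(1/m)·∑_{{i,j}∈E}(x_i−x_j)² + ∑ β_i (x_i−x̄)² − α·∑ μ_i (x_i−x̄)² for all `x`)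
with `α ≥ (7/8)γ` and `0 ≤ β ≤ γ·μ` supported on a set `S` with `μ(S) ≤ 1/8`
forces `S` to capture at least half of every cut `C` with `μ(C) ≤ 1/2` and
`φ(C) ≤ γ/16`. -/
theorem dual_certificate_correlation {n : ℕ}
    (G : SimpleGraph (Fin n)) [DecidableRel G.Adj]
    (m : ℕ) (hm : m = G.edgeFinset.card) (hm1 : 1 ≤ m)
    (hdeg : ∀ i, 0 < G.degree i)
    (μ : Fin n → ℝ) (hμ : ∀ i, μ i = (G.degree i : ℝ) / (2 * m))
    (γ : ℝ) (hγ : 0 < γ)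
    (S : Finset (Fin n)) (hS : μvol G m S ≤ 1 / 8)
    (α : ℝ) (hα : (7 / 8) * γ ≤ α)
    (β : Fin n → ℝ)
    (hβ0 : ∀ i, 0 ≤ β i) (hβγ : ∀ i, β i ≤ γ * μ i)
    (hβsupp : ∀ i, i ∉ S → β i = 0)
    (hdual : ∀ x : Fin n → ℝ,
      0 ≤ (1 / (m : ℝ)) * edgeSum G (fun i j => (x i - x j) ^ 2) +
        ∑ i, β i * (x i - ∑ j, μ j * x j) ^ 2 -
        α * ∑ i, μ i * (x i - ∑ j, μ j * x j) ^ 2) :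
    ∀ C : Finset (Fin n), C.Nonempty → C ≠ Finset.univ →
      μvol G m C ≤ 1 / 2 → conductance G C ≤ γ / 16 →
      (1 / 2) * μvol G m C ≤ μvol G m (S ∩ C) := by
  intro C hCne hCuniv hCμ hCφ
  have hm0 : (0:ℝ) < m := by exact_mod_cast hm1
  have hμpos : ∀ i, 0 < μ i := by
    intro i; rw [hμ]
    apply div_pos
    · exact_mod_cast hdeg i
    · linarith
  have hhand : ∑ i, (G.degree i : ℝ) = 2 * m := by
    have h := G.sum_degrees_eq_twice_card_edges
    rw [← hm] at h
    exact_mod_cast h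
  have hμtot : ∑ i, μ i = 1 := by
    have : ∑ i, μ i = (∑ i, (G.degree i : ℝ)) / (2 * m) := by
      rw [Finset.sum_div]; exact Finset.sum_congr rfl fun i _ => hμ i
    rw [this, hhand]
    field_simp
  set t := μvol G m C with ht
  set s := μvol G m (S ∩ C) with hs
  have htμ : t = ∑ i ∈ C, μ i := by
    rw [ht]; unfold μvol; exact Finset.sum_congr rfl fun i _ => (hμ i).symm
  have hsμ : s = ∑ i ∈ S ∩ C, μ i := by
    rw [hs]; unfold μvol; exact Finset.sum_congr rfl fun i _ => (hμ i).symm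
  have ht0 : 0 < t := by
    rw [htμ]; exact Finset.sum_pos (fun i _ => hμpos i) hCne
  have ht1 : t ≤ 1/2 := hCμ
  have hcomplμ : ∑ i ∈ Cᶜ, μ i = 1 - t := by
    have h := Finset.sum_add_sum_compl C μ
    rw [hμtot, ← htμ] at h
    linarith
  have hs0 : 0 ≤ s := by
    rw [hsμ]; exact Finset.sum_nonneg fun i _ => (hμpos i).le
  -- volumes
  have hvolC : (vol G C : ℝ) = 2 * m * t := by
    have : t = (vol G C : ℝ) / (2 * m) := by
      rw [ht]; unfold μvol vol; push_cast; rw [Finset.sum_div]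
    rw [this]; field_simp
  have hvolCc : (vol G Cᶜ : ℝ) = 2 * m * (1 - t) := by
    have h : (vol G C : ℝ) + (vol G Cᶜ : ℝ) = 2 * m := by
      have := Finset.sum_add_sum_compl C (fun i => (G.degree i : ℝ))
      unfold vol; push_cast
      rw [this]; exact hhand
    linarith
  have hvolCpos : (0:ℝ) < (vol G C : ℝ) := by rw [hvolC]; positivity
  have hmin : min (vol G C : ℝ) (vol G Cᶜ : ℝ) = (vol G C : ℝ) := by
    apply min_eq_left
    rw [hvolC, hvolCc]; nlinarith
  -- cut bound
  have hcut : (cutSize G C : ℝ) ≤ γ / 16 * (2 * m * t) := by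
    have h := hCφ
    unfold conductance at h
    rw [hmin, div_le_iff₀ hvolCpos] at h
    calc (cutSize G C : ℝ) ≤ γ / 16 * (vol G C : ℝ) := h
      _ = γ / 16 * (2 * m * t) := by rw [hvolC]
  -- test vector
  set x : Fin n → ℝ := fun i => if i ∈ C then 1 else 0 with hx
  have hxbar : ∑ j, μ j * x j = t := by
    rw [htμ]
    rw [← Finset.sum_add_sum_compl C (fun j => μ j * x j)]
    have h1 : ∑ j ∈ C, μ j * x j = ∑ j ∈ C, μ j :=
      Finset.sum_congr rfl fun j hj => by simp [hx, hj]
    have h2 : ∑ j ∈ Cᶜ, μ j * x j = 0 :=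
      Finset.sum_eq_zero fun j hj => by
        simp [hx, (Finset.mem_compl.mp hj)]
    rw [h1, h2, add_zero]
  -- edge term
  have hedge : edgeSum G (fun i j => (x i - x j) ^ 2) = (cutSize G C : ℝ) := by
    unfold edgeSum
    have hsplit : ∀ g : Fin n → Fin n → ℝ, ∑ i, ∑ j, g i j =
        ((∑ i ∈ C, ∑ j ∈ C, g i j) + ∑ i ∈ C, ∑ j ∈ Cᶜ, g i j) +
        ((∑ i ∈ Cᶜ, ∑ j ∈ C, g i j) + ∑ i ∈ Cᶜ, ∑ j ∈ Cᶜ, g i j) := by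
      intro g
      rw [← Finset.sum_add_sum_compl C (fun i => ∑ j, g i j)]
      congr 1
      · rw [← Finset.sum_add_distrib]
        exact Finset.sum_congr rfl fun i _ => (Finset.sum_add_sum_compl C (g i)).symm
      · rw [← Finset.sum_add_distrib]
        exact Finset.sum_congr rfl fun i _ => (Finset.sum_add_sum_compl C (g i)).symm
    rw [hsplit]
    have hCC : ∑ i ∈ C, ∑ j ∈ C, (if G.Adj i j then (x i - x j) ^ 2 else 0) = 0 :=
      Finset.sum_eq_zero fun i hi => Finset.sum_eq_zero fun j hj => by
        simp [hx, hi, hj]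
    have hCcCc : ∑ i ∈ Cᶜ, ∑ j ∈ Cᶜ, (if G.Adj i j then (x i - x j) ^ 2 else 0) = 0 :=
      Finset.sum_eq_zero fun i hi => Finset.sum_eq_zero fun j hj => by
        simp [hx, Finset.mem_compl.mp hi, Finset.mem_compl.mp hj]
    have hCCc : ∑ i ∈ C, ∑ j ∈ Cᶜ, (if G.Adj i j then (x i - x j) ^ 2 else 0)
        = (cutSize G C : ℝ) := by
      unfold cutSize
      push_cast
      refine Finset.sum_congr rfl fun i hi => Finset.sum_congr rfl fun j hj => ?_
      simp [hx, hi, Finset.mem_compl.mp hj]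
    have hCcC : ∑ i ∈ Cᶜ, ∑ j ∈ C, (if G.Adj i j then (x i - x j) ^ 2 else 0)
        = (cutSize G C : ℝ) := by
      rw [Finset.sum_comm]
      unfold cutSize
      push_cast
      refine Finset.sum_congr rfl fun j hj => Finset.sum_congr rfl fun i hi => ?_
      have : G.Adj j i ↔ G.Adj i j := ⟨fun h => h.symm, fun h => h.symm⟩
      simp [hx, hj, Finset.mem_compl.mp hi, this]
    rw [hCC, hCcCc, hCCc, hCcC]
    ring
  -- beta term
  have hβsum : ∑ i, β i * (x i - t) ^ 2 =
      (∑ i ∈ C, β i) * (1 - t) ^ 2 + (∑ i ∈ Cᶜ, β i) * t ^ 2 := by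
    rw [← Finset.sum_add_sum_compl C (fun i => β i * (x i - t) ^ 2)]
    congr 1
    · rw [Finset.sum_mul]
      exact Finset.sum_congr rfl fun i hi => by simp [hx, hi]
    · rw [Finset.sum_mul]
      refine Finset.sum_congr rfl fun i hi => ?_
      simp only [hx, Finset.mem_compl.mp hi, if_false]
      ring
  have hβC : ∑ i ∈ C, β i ≤ γ * s := by
    have h1 : ∑ i ∈ C, β i = ∑ i ∈ S ∩ C, β i := by
      refine (Finset.sum_subset Finset.inter_subset_right fun i hi hni => ?_).symm
      exact hβsupp i fun hiS => hni (Finset.mem_inter.mpr ⟨hiS, hi⟩)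
    rw [h1, hsμ, Finset.mul_sum]
    exact Finset.sum_le_sum fun i _ => hβγ i
  have hβCc : ∑ i ∈ Cᶜ, β i ≤ γ * (1/8) := by
    have h1 : ∑ i ∈ Cᶜ, β i = ∑ i ∈ S ∩ Cᶜ, β i := by
      refine (Finset.sum_subset Finset.inter_subset_right fun i hi hni => ?_).symm
      exact hβsupp i fun hiS => hni (Finset.mem_inter.mpr ⟨hiS, hi⟩)
    have h2 : ∑ i ∈ S ∩ Cᶜ, β i ≤ ∑ i ∈ S, γ * μ i := by
      calc ∑ i ∈ S ∩ Cᶜ, β i ≤ ∑ i ∈ S ∩ Cᶜ, γ * μ i :=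
            Finset.sum_le_sum fun i _ => hβγ i
        _ ≤ ∑ i ∈ S, γ * μ i := Finset.sum_le_sum_of_subset_of_nonneg
            Finset.inter_subset_left (fun i _ _ => mul_nonneg hγ.le (hμpos i).le)
    have h3 : ∑ i ∈ S, γ * μ i = γ * μvol G m S := by
      unfold μvol
      rw [Finset.mul_sum]
      exact Finset.sum_congr rfl fun i _ => by rw [hμ]
    rw [h1]
    calc ∑ i ∈ S ∩ Cᶜ, β i ≤ γ * μvol G m S := by rw [← h3]; exact h2
      _ ≤ γ * (1/8) := by
          apply mul_le_mul_of_nonneg_left _ hγ.le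
          linarith [hS]
  -- mu term
  have hμsum : ∑ i, μ i * (x i - t) ^ 2 = t * (1 - t) := by
    rw [← Finset.sum_add_sum_compl C (fun i => μ i * (x i - t) ^ 2)]
    have h1 : ∑ i ∈ C, μ i * (x i - t) ^ 2 = (∑ i ∈ C, μ i) * (1 - t) ^ 2 := by
      rw [Finset.sum_mul]
      exact Finset.sum_congr rfl fun i hi => by simp [hx, hi]
    have h2 : ∑ i ∈ Cᶜ, μ i * (x i - t) ^ 2 = (∑ i ∈ Cᶜ, μ i) * t ^ 2 := by
      rw [Finset.sum_mul]
      refine Finset.sum_congr rfl fun i hi => ?_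
      simp only [hx, Finset.mem_compl.mp hi, if_false]
      ring
    rw [h1, h2, ← htμ, hcomplμ]
    ring
  -- assemble
  have hd := hdual x
  rw [hxbar, hedge, hβsum, hμsum] at hd
  have hedgebd : (1 / (m:ℝ)) * (cutSize G C : ℝ) ≤ γ / 8 * t := by
    rw [div_mul_eq_mul_div, one_mul, div_le_iff₀ hm0]
    calc (cutSize G C : ℝ) ≤ γ / 16 * (2 * m * t) := hcut
      _ = γ / 8 * t * m := by ring
  have hsq1 : (0:ℝ) ≤ (1 - t) ^ 2 := sq_nonneg _
  have hsq2 : (0:ℝ) ≤ t ^ 2 := sq_nonneg _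
  have hαbd : 7 / 8 * γ * (t * (1 - t)) ≤ α * (t * (1 - t)) := by
    apply mul_le_mul_of_nonneg_right hα
    nlinarith
  have hkey : 0 ≤ γ / 8 * t + γ * s * (1 - t) ^ 2 + γ * (1/8) * t ^ 2
      - 7 / 8 * γ * (t * (1 - t)) := by
    have b1 : (∑ i ∈ C, β i) * (1 - t) ^ 2 ≤ γ * s * (1 - t) ^ 2 :=
      mul_le_mul_of_nonneg_right hβC hsq1
    have b2 : (∑ i ∈ Cᶜ, β i) * t ^ 2 ≤ γ * (1/8) * t ^ 2 :=
      mul_le_mul_of_nonneg_right hβCc hsq2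
    linarith
  have hγE : 0 ≤ γ * (1 / 8 * t + s * (1 - t) ^ 2 + 1/8 * t ^ 2 - 7 / 8 * (t * (1 - t))) := by
    calc (0:ℝ) ≤ γ / 8 * t + γ * s * (1 - t) ^ 2 + γ * (1/8) * t ^ 2
        - 7 / 8 * γ * (t * (1 - t)) := hkey
      _ = γ * (1 / 8 * t + s * (1 - t) ^ 2 + 1/8 * t ^ 2 - 7 / 8 * (t * (1 - t))) := by ring
  have hE : 0 ≤ 1 / 8 * t + s * (1 - t) ^ 2 + 1/8 * t ^ 2 - 7 / 8 * (t * (1 - t)) :=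
    (mul_nonneg_iff_of_pos_left hγ).mp hγE
  have h4 : t ^ 2 ≤ 1/4 := by nlinarith
  nlinarith [hE, sq_nonneg (1 - t), mul_le_mul_of_nonneg_left h4 ht0.le, ht0, hs0]
end

section
/- Let b ∈ (0, 1/2], γ ∈ (0, 1), and let v : V → ℝ^d be an embedding with v_avg = Σ_{i∈V} μ_i v_i and r_i = ‖v_i − v_avg‖. Relabel the vertices so that r_1 ≥ r_2 ≥ … ≥ r_n, let S_j = {1,…,j}, and let z be the smallest index with μ(S_z) ≥ b/8. Let R = {i ∈ V : r_i² ≤ 32·(1−b)/b}. Suppose (1/m)·Σ_{{i,j}∈E} ‖v_i − v_j‖² ≤ 2γ, Σ_{i∈V} μ_i r_i² = 1, and Σ_{i∈R} Σ_{j∈R} μ_i μ_j ‖v_i − v_j‖² < μ(R)²/64. Then there exists h with 1 ≤ h < z such that φ(S_h) ≤ 2048·√γ and Σ_{i∈S_h} μ_i r_i² ≥ 1 − 3/64. -/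
open Finset

lemma tele_aux (F : ℕ → ℝ) {a b : ℕ} (h : a ≤ b) :
    ∑ x ∈ Finset.Ico a b, (F x - F (x+1)) = F a - F b := by
  induction b, h using Nat.le_induction with
  | base => simp
  | succ b hb ih =>
      rw [Finset.sum_Ico_succ_top (by omega), ih]; ring

lemma lowerset_eq_sweep {n : ℕ} (s : Finset (Fin n))
    (H : ∀ i j : Fin n, i ≤ j → j ∈ s → i ∈ s) :
    s = (Finset.univ.filter (fun i : Fin n => (i : ℕ) < s.card)) := by
  have key : ∀ i : Fin n, i ∈ s ↔ (i : ℕ) < s.card := by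
    intro i
    constructor
    · intro hi
      have hsub : (Finset.univ.filter (fun j : Fin n => j ≤ i)) ⊆ s := by
        intro j hj
        simp only [Finset.mem_filter, Finset.mem_univ, true_and] at hj
        exact H j i hj hi
      have hcard := Finset.card_le_card hsub
      have : (Finset.univ.filter (fun j : Fin n => j ≤ i)).card = (i : ℕ) + 1 := by
        rw [show (Finset.univ.filter (fun j : Fin n => j ≤ i)) = Finset.Iic i by
          ext j; simp]
        exact Fin.card_Iic i
      omega
    · intro hi
      by_contra hns
      have hsub : s ⊆ Finset.univ.filter (fun j : Fin n => j < i) := by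
        intro x hx
        simp only [Finset.mem_filter, Finset.mem_univ, true_and]
        by_contra hxi
        exact hns (H i x (le_of_not_gt hxi) hx)
      have hcard := Finset.card_le_card hsub
      have : (Finset.univ.filter (fun j : Fin n => j < i)).card = (i : ℕ) := by
        rw [show (Finset.univ.filter (fun j : Fin n => j < i)) = Finset.Iio i by
          ext j; simp]
        exact Fin.card_Iio i
      omega
  ext i; simp [key i]

open scoped RealInnerProductSpace

lemma inner_sum_sum {E : Type*} [NormedAddCommGroup E] [InnerProductSpace ℝ E] {ι : Type*}
    (s : Finset ι) (w : ι → ℝ) (x : ι → E) :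
    ‖∑ i ∈ s, w i • x i‖ ^ 2 = ∑ i ∈ s, ∑ j ∈ s, w i * w j * ⟪x i, x j⟫ := by
  rw [← real_inner_self_eq_norm_sq, sum_inner]
  refine Finset.sum_congr rfl fun i _ => ?_
  rw [real_inner_smul_left, inner_sum, Finset.mul_sum]
  refine Finset.sum_congr rfl fun j _ => ?_
  rw [real_inner_smul_right]; ring

lemma quad_id {E : Type*} [NormedAddCommGroup E] [InnerProductSpace ℝ E] {ι : Type*}
    (s : Finset ι) (w : ι → ℝ) (x : ι → E) :
    ∑ i ∈ s, ∑ j ∈ s, w i * w j * ‖x i - x j‖ ^ 2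
      = 2 * (∑ i ∈ s, w i) * (∑ i ∈ s, w i * ‖x i‖ ^ 2)
        - 2 * ‖∑ i ∈ s, w i • x i‖ ^ 2 := by
  rw [inner_sum_sum]
  have expand : ∀ i ∈ s, ∀ j ∈ s, w i * w j * ‖x i - x j‖ ^ 2
      = w i * (w j * ‖x i‖ ^ 2) + (w i * ‖x j‖ ^ 2) * w j - 2 * (w i * w j * ⟪x i, x j⟫) := by
    intro i _ j _
    rw [@norm_sub_sq_real]; ring
  calc ∑ i ∈ s, ∑ j ∈ s, w i * w j * ‖x i - x j‖ ^ 2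
      = ∑ i ∈ s, ∑ j ∈ s, (w i * (w j * ‖x i‖ ^ 2) + (w i * ‖x j‖ ^ 2) * w j
          - 2 * (w i * w j * ⟪x i, x j⟫)) := by
        refine Finset.sum_congr rfl fun i hi => Finset.sum_congr rfl fun j hj => expand i hi j hj
    _ = 2 * (∑ i ∈ s, w i) * (∑ i ∈ s, w i * ‖x i‖ ^ 2)
        - 2 * ∑ i ∈ s, ∑ j ∈ s, w i * w j * ⟪x i, x j⟫ := by
        have h1 : ∑ i ∈ s, ∑ j ∈ s, w i * (w j * ‖x i‖ ^ 2)
            = (∑ i ∈ s, w i) * (∑ i ∈ s, w i * ‖x i‖ ^ 2) := by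
          have : ∀ i ∈ s, ∑ j ∈ s, w i * (w j * ‖x i‖ ^ 2)
              = (∑ j ∈ s, w j) * (w i * ‖x i‖ ^ 2) := by
            intro i _
            rw [Finset.sum_mul]
            exact Finset.sum_congr rfl fun j _ => by ring
          rw [Finset.sum_congr rfl this, ← Finset.mul_sum]
        have h2 : ∑ i ∈ s, ∑ j ∈ s, (w i * ‖x j‖ ^ 2 * w j)
            = (∑ i ∈ s, w i) * (∑ i ∈ s, w i * ‖x i‖ ^ 2) := by
          have : ∀ i ∈ s, ∑ j ∈ s, (w i * ‖x j‖ ^ 2 * w j)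
              = w i * (∑ j ∈ s, w j * ‖x j‖ ^ 2) := by
            intro i _
            rw [Finset.mul_sum]
            exact Finset.sum_congr rfl fun j _ => by ring
          rw [Finset.sum_congr rfl this, ← Finset.sum_mul]
        calc ∑ i ∈ s, ∑ j ∈ s, (w i * (w j * ‖x i‖ ^ 2) + w i * ‖x j‖ ^ 2 * w j
              - 2 * (w i * w j * ⟪x i, x j⟫))
            = (∑ i ∈ s, ∑ j ∈ s, w i * (w j * ‖x i‖ ^ 2))
              + (∑ i ∈ s, ∑ j ∈ s, w i * ‖x j‖ ^ 2 * w j)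
              - ∑ i ∈ s, ∑ j ∈ s, 2 * (w i * w j * ⟪x i, x j⟫) := by
              simp only [Finset.sum_add_distrib, Finset.sum_sub_distrib]
          _ = 2 * (∑ i ∈ s, w i) * (∑ i ∈ s, w i * ‖x i‖ ^ 2)
              - 2 * ∑ i ∈ s, ∑ j ∈ s, w i * w j * ⟪x i, x j⟫ := by
              rw [h1, h2]
              simp only [← Finset.mul_sum]
              ring

lemma conc_bound {ι : Type*} [Fintype ι] [DecidableEq ι]
    {E : Type*} [NormedAddCommGroup E] [InnerProductSpace ℝ E]
    (R : Finset ι) (μ : ι → ℝ) (v : ι → E) (r : ι → ℝ)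
    (hμpos : ∀ i, 0 < μ i) (hμsum : ∑ i, μ i = 1)
    (hr : ∀ i, r i = ‖v i - ∑ j, μ j • v j‖)
    (hsub1 : ∑ i ∈ Rᶜ, μ i * r i ^ 2 ≤ 1)
    (hμRc32 : ∑ i ∈ Rᶜ, μ i ≤ 1 / 32)
    (hnotround : ∑ i ∈ R, ∑ j ∈ R, μ i * μ j * ‖v i - v j‖ ^ 2 < (∑ i ∈ R, μ i) ^ 2 / 64) :
    ∑ i ∈ R, μ i * r i ^ 2 ≤ 159 / 3968 := by
  have haRc : (∑ i ∈ R, μ i) + (∑ i ∈ Rᶜ, μ i) = 1 := by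
    rw [Finset.sum_add_sum_compl]; exact hμsum
  set a : ℝ := ∑ i ∈ R, μ i with haa
  have ha31 : 31 / 32 ≤ a := by linarith
  have ha1 : a ≤ 1 := by
    have : 0 ≤ ∑ i ∈ Rᶜ, μ i := Finset.sum_nonneg fun i _ => (hμpos i).le
    linarith
  have ha0 : (0:ℝ) < a := by linarith
  set u : E := ∑ j, μ j • v j with hu
  set c : E := a⁻¹ • ∑ i ∈ R, μ i • v i with hc
  have hac : a • c = ∑ i ∈ R, μ i • v i := by
    rw [hc]; exact smul_inv_smul₀ ha0.ne' _
  have hsum0 : ∑ i ∈ R, μ i • (v i - c) = 0 := by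
    simp only [smul_sub]
    rw [Finset.sum_sub_distrib, ← Finset.sum_smul, ← haa, hac, sub_self]
  set X : ℝ := ∑ i ∈ R, μ i * ‖v i - c‖ ^ 2 with hX
  have hXnn : 0 ≤ X := Finset.sum_nonneg fun i _ =>
    mul_nonneg (hμpos i).le (sq_nonneg _)
  have hq := quad_id R μ (fun i => v i - c)
  simp only [sub_sub_sub_cancel_right, hsum0, norm_zero] at hq
  have hq' : ∑ i ∈ R, ∑ j ∈ R, μ i * μ j * ‖v i - v j‖ ^ 2 = 2 * a * X := by
    rw [hq]; ring
  have hXbound : X < a / 128 := by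
    have h1 : 2 * a * X < a ^ 2 / 64 := by rw [← hq']; exact hnotround
    nlinarith [ha0]
  have htot : ∑ i, μ i • (v i - u) = 0 := by
    simp only [smul_sub]
    rw [Finset.sum_sub_distrib, ← Finset.sum_smul, hμsum, one_smul, ← hu, sub_self]
  have haRu : a • (c - u) = ∑ i ∈ R, μ i • (v i - u) := by
    rw [smul_sub, hac]
    simp only [smul_sub]
    rw [Finset.sum_sub_distrib, ← Finset.sum_smul, ← haa]
  have hflip : a • (c - u) = - ∑ i ∈ Rᶜ, μ i • (v i - u) := by
    have h2 := Finset.sum_add_sum_compl R (fun i => μ i • (v i - u))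
    rw [htot] at h2
    rw [haRu]
    linear_combination (norm := module) h2
  have hnorm1 : ‖a • (c - u)‖ ≤ ∑ i ∈ Rᶜ, μ i * r i := by
    rw [hflip, norm_neg]
    refine (norm_sum_le _ _).trans (Finset.sum_le_sum fun i _ => ?_)
    rw [norm_smul, Real.norm_eq_abs, abs_of_nonneg (hμpos i).le, hr i]
  have hCS : (∑ i ∈ Rᶜ, μ i * r i) ^ 2
      ≤ (∑ i ∈ Rᶜ, μ i) * (∑ i ∈ Rᶜ, μ i * r i ^ 2) := by
    have h1 : ∀ i ∈ Rᶜ, μ i * r i = Real.sqrt (μ i) * (Real.sqrt (μ i) * r i) := by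
      intro i _
      rw [← mul_assoc, Real.mul_self_sqrt (hμpos i).le]
    have h2 : ∀ i ∈ Rᶜ, Real.sqrt (μ i) ^ 2 = μ i := fun i _ =>
      Real.sq_sqrt (hμpos i).le
    have h3 : ∀ i ∈ Rᶜ, (Real.sqrt (μ i) * r i) ^ 2 = μ i * r i ^ 2 := by
      intro i _
      rw [mul_pow, Real.sq_sqrt (hμpos i).le]
    calc (∑ i ∈ Rᶜ, μ i * r i) ^ 2
        = (∑ i ∈ Rᶜ, Real.sqrt (μ i) * (Real.sqrt (μ i) * r i)) ^ 2 := by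
          rw [Finset.sum_congr rfl h1]
      _ ≤ (∑ i ∈ Rᶜ, Real.sqrt (μ i) ^ 2) * (∑ i ∈ Rᶜ, (Real.sqrt (μ i) * r i) ^ 2) :=
          Finset.sum_mul_sq_le_sq_mul_sq _ _ _
      _ = (∑ i ∈ Rᶜ, μ i) * (∑ i ∈ Rᶜ, μ i * r i ^ 2) := by
          rw [Finset.sum_congr rfl h2, Finset.sum_congr rfl h3]
  have hnorm2 : a ^ 2 * ‖c - u‖ ^ 2 ≤ 1 / 32 := by
    have e1 : ‖a • (c - u)‖ ^ 2 = a ^ 2 * ‖c - u‖ ^ 2 := by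
      rw [norm_smul, Real.norm_eq_abs, mul_pow, sq_abs]
    have e2 : ‖a • (c - u)‖ ^ 2 ≤ (∑ i ∈ Rᶜ, μ i * r i) ^ 2 :=
      pow_le_pow_left₀ (norm_nonneg _) hnorm1 2
    have e3 : (∑ i ∈ Rᶜ, μ i) * (∑ i ∈ Rᶜ, μ i * r i ^ 2) ≤ (1/32) * 1 := by
      apply mul_le_mul hμRc32 hsub1
      · exact Finset.sum_nonneg fun i _ => mul_nonneg (hμpos i).le (sq_nonneg _)
      · norm_num
    rw [← e1]
    calc ‖a • (c - u)‖ ^ 2 ≤ (∑ i ∈ Rᶜ, μ i * r i) ^ 2 := e2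
      _ ≤ (∑ i ∈ Rᶜ, μ i) * (∑ i ∈ Rᶜ, μ i * r i ^ 2) := hCS
      _ ≤ (1/32) * 1 := e3
      _ = 1/32 := by norm_num
  have hcu : a * ‖c - u‖ ^ 2 ≤ 1 / 31 := by
    nlinarith [sq_nonneg (‖c - u‖), ha31, ha1, ha0, hnorm2]
  have hterm : ∀ i ∈ R, μ i * r i ^ 2
      = μ i * ‖v i - c‖ ^ 2 + 2 * (μ i * ⟪v i - c, c - u⟫) + μ i * ‖c - u‖ ^ 2 := by
    intro i _
    rw [hr i, show v i - u = (v i - c) + (c - u) by abel, norm_add_sq_real]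
    ring
  have hcross : ∑ i ∈ R, μ i * ⟪v i - c, c - u⟫ = 0 := by
    have h4 : ∀ i ∈ R, μ i * ⟪v i - c, c - u⟫ = ⟪μ i • (v i - c), c - u⟫ := by
      intro i _; rw [real_inner_smul_left]
    rw [Finset.sum_congr rfl h4, ← sum_inner, hsum0, inner_zero_left]
  have hWsum : ∑ i ∈ R, μ i * r i ^ 2 = X + a * ‖c - u‖ ^ 2 := by
    rw [Finset.sum_congr rfl hterm]
    simp only [Finset.sum_add_distrib]
    rw [← Finset.mul_sum, hcross, ← Finset.sum_mul, ← haa, ← hX]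
    ring
  rw [hWsum]
  linarith [hXbound, hcu]

set_option maxHeartbeats 2000000 in
/-- **Case 3 of the proof of Theorem 2.5 (the Oracle).** The vertices are relabeled so
that the radii `r_i = ‖v_i − v_avg‖` are nonincreasing, `z` is the smallest index with
`μ(S_z) ≥ b/8`, and `R = {i : r_i² ≤ 32(1−b)/b}`. If the embedding has edge energy
`(1/m)·∑_{{i,j}∈E}‖v_i − v_j‖² ≤ 2γ`, total variance `∑ μ_i r_i² = 1`, and is not
roundable in the sense that `∑_{i,j∈R} μ_iμ_j‖v_i − v_j‖² < μ(R)²/64`, then some radial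
sweep cut `S_h` with `1 ≤ h < z` has conductance at most `2048·√γ` and captures almost
all the variance: `∑_{i∈S_h} μ_i r_i² ≥ 1 − 3/64`. -/
theorem oracle_case_three {n : ℕ}
    (G : SimpleGraph (Fin n)) [DecidableRel G.Adj]
    (m : ℕ) (hm : m = G.edgeFinset.card) (hm1 : 1 ≤ m)
    (hdeg : ∀ i, 0 < G.degree i)
    (μ : Fin n → ℝ) (hμ : ∀ i, μ i = (G.degree i : ℝ) / (2 * m))
    (b γ : ℝ) (hb0 : 0 < b) (hb2 : b ≤ 1 / 2) (hγ0 : 0 < γ) (hγ1 : γ < 1)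
    {d : ℕ} (v : Fin n → EuclideanSpace ℝ (Fin d))
    (r : Fin n → ℝ) (hr : ∀ i, r i = ‖v i - ∑ j, μ j • v j‖)
    (hsorted : ∀ i j : Fin n, i ≤ j → r j ≤ r i)
    (z : ℕ)
    (hz : b / 8 ≤ μvol G m (sweep n z))
    (hzmin : ∀ h : ℕ, h < z → μvol G m (sweep n h) < b / 8)
    (R : Finset (Fin n))
    (hR : R = Finset.univ.filter (fun i => r i ^ 2 ≤ 32 * (1 - b) / b))
    (henergy : (1 / (m : ℝ)) * edgeSum G (fun i j => ‖v i - v j‖ ^ 2) ≤ 2 * γ)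
    (hvar : ∑ i, μ i * r i ^ 2 = 1)
    (hnotround : ∑ i ∈ R, ∑ j ∈ R, μ i * μ j * ‖v i - v j‖ ^ 2 < μvol G m R ^ 2 / 64) :
    ∃ h : ℕ, 1 ≤ h ∧ h < z ∧
      conductance G (sweep n h) ≤ 2048 * Real.sqrt γ ∧
      1 - 3 / 64 ≤ ∑ i ∈ sweep n h, μ i * r i ^ 2 := by
  classical
  -- basic positivity facts
  have hm0 : (0:ℝ) < m := by exact_mod_cast hm1
  have h2m : (0:ℝ) < 2 * m := by linarith
  have hμpos : ∀ i, 0 < μ i := by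
    intro i; rw [hμ]
    exact div_pos (by exact_mod_cast hdeg i) h2m
  have hμvolS : ∀ S : Finset (Fin n), μvol G m S = ∑ i ∈ S, μ i := by
    intro S; unfold μvol; exact (Finset.sum_congr rfl fun i _ => (hμ i).symm)
  have hdegsum : (∑ i, (G.degree i : ℝ)) = 2 * m := by
    rw [← Nat.cast_sum]
    rw [SimpleGraph.sum_degrees_eq_twice_card_edges, hm]
    push_cast; ring
  have hμsum : ∑ i, μ i = 1 := by
    simp_rw [hμ]
    rw [← Finset.sum_div, hdegsum]
    field_simp
  have hrnn : ∀ i, 0 ≤ r i := fun i => (hr i) ▸ norm_nonneg _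
  have hμone : μvol G m Finset.univ = 1 := by rw [hμvolS]; exact hμsum
  have hμvol_mono : ∀ S S' : Finset (Fin n), S ⊆ S' → μvol G m S ≤ μvol G m S' := by
    intro S S' hss
    rw [hμvolS, hμvolS]
    exact Finset.sum_le_sum_of_subset_of_nonneg hss (fun i _ _ => (hμpos i).le)
  have hμvol_le_one : ∀ S : Finset (Fin n), μvol G m S ≤ 1 := fun S =>
    (hμvol_mono S Finset.univ (Finset.subset_univ S)).trans_eq hμone
  -- partial variance sums
  set f : ℕ → ℝ := fun h => ∑ i ∈ sweep n h, μ i * r i ^ 2 with hf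
  have hterm_nn : ∀ i : Fin n, 0 ≤ μ i * r i ^ 2 := fun i =>
    mul_nonneg (hμpos i).le (sq_nonneg _)
  have hsub1 : ∀ S : Finset (Fin n), ∑ i ∈ S, μ i * r i ^ 2 ≤ 1 := by
    intro S
    rw [← hvar]
    exact Finset.sum_le_sum_of_subset_of_nonneg (Finset.subset_univ S)
      (fun i _ _ => hterm_nn i)
  have hf_mono : ∀ h1 h2 : ℕ, h1 ≤ h2 → f h1 ≤ f h2 := by
    intro h1 h2 h12
    apply Finset.sum_le_sum_of_subset_of_nonneg
    · intro i hi
      simp only [sweep, Finset.mem_filter, Finset.mem_univ, true_and] at hi ⊢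
      omega
    · exact fun i _ _ => hterm_nn i
  -- preliminary: vertices outside R have large radius
  have hRcmem : ∀ i ∈ Rᶜ, 16 / b ≤ r i ^ 2 := by
    intro i hi
    simp only [hR, Finset.mem_compl, Finset.mem_filter, Finset.mem_univ, true_and,
      not_le] at hi
    have h16 : 16 / b ≤ 32 * (1 - b) / b := by
      rw [div_le_div_iff₀ hb0 hb0]; nlinarith
    linarith
  have hμRc : μvol G m Rᶜ ≤ b / 16 := by
    have h1 : ∑ i ∈ Rᶜ, μ i * (16 / b) ≤ ∑ i ∈ Rᶜ, μ i * r i ^ 2 :=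
      Finset.sum_le_sum fun i hi =>
        mul_le_mul_of_nonneg_left (hRcmem i hi) (hμpos i).le
    rw [← Finset.sum_mul] at h1
    have h2 := (h1.trans (hsub1 Rᶜ))
    rw [hμvolS]
    have h3 : (∑ i ∈ Rᶜ, μ i) * 16 ≤ b := by
      calc (∑ i ∈ Rᶜ, μ i) * 16 = ((∑ i ∈ Rᶜ, μ i) * (16 / b)) * b := by field_simp
        _ ≤ 1 * b := mul_le_mul_of_nonneg_right h2 hb0.le
        _ = b := one_mul b
    linarith
  have hμRc32 : ∑ i ∈ Rᶜ, μ i ≤ 1 / 32 := by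
    have := hμRc; rw [hμvolS] at this; linarith
  have haR : μvol G m R = ∑ i ∈ R, μ i := hμvolS R
  have haRc : (∑ i ∈ R, μ i) + (∑ i ∈ Rᶜ, μ i) = 1 := by
    rw [Finset.sum_add_sum_compl]; exact hμsum
  have ha31 : 31 / 32 ≤ μvol G m R := by rw [haR]; linarith
  have ha1 : μvol G m R ≤ 1 := hμvol_le_one R
  have ha0 : (0:ℝ) < μvol G m R := by linarith
  -- the concentration part: W = ∑_{i ∈ R} μ_i r_i² ≤ 159/3968
  have hW : ∑ i ∈ R, μ i * r i ^ 2 ≤ 159 / 3968 := by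
    refine conc_bound R μ v r hμpos hμsum hr (hsub1 Rᶜ) hμRc32 ?_
    rw [← hμvolS]
    exact hnotround
  -- R̄ is a sweep set
  set k : ℕ := Rᶜ.card with hk
  have hRc_sweep : Rᶜ = sweep n k := by
    apply lowerset_eq_sweep
    intro i j hij hj
    simp only [hR, Finset.mem_compl, Finset.mem_filter, Finset.mem_univ, true_and,
      not_le] at hj ⊢
    have := hsorted i j hij
    nlinarith [hrnn j]
  have hout : ∀ i : Fin n, (i:ℕ) < k → 16 / b ≤ r i ^ 2 := by
    intro i hik
    have hiRc : i ∈ Rᶜ := by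
      rw [hRc_sweep]; simp [sweep, hik]
    simp only [hR, Finset.mem_compl, Finset.mem_filter, Finset.mem_univ, true_and,
      not_le] at hiRc
    have h16 : 16 / b ≤ 32 * (1 - b) / b := by
      rw [div_le_div_iff₀ hb0 hb0]; nlinarith
    linarith
  have hfk : 1 - 159/3968 ≤ f k := by
    have hsplit : (∑ i ∈ Rᶜ, μ i * r i ^ 2) + (∑ i ∈ R, μ i * r i ^ 2) = 1 := by
      rw [add_comm, Finset.sum_add_sum_compl, hvar]
    have hfkR : f k = ∑ i ∈ Rᶜ, μ i * r i ^ 2 := by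
      simp only [hf]
      rw [← hRc_sweep]
    rw [hfkR]
    linarith [hW]
  -- z basic facts
  have hb8 : (0:ℝ) < b / 8 := by linarith
  have hz1 : 1 ≤ z := by
    rcases Nat.eq_zero_or_pos z with h0 | h1
    · exfalso
      rw [h0] at hz
      have : sweep n 0 = ∅ := by ext i; simp [sweep]
      rw [this] at hz
      simp [μvol] at hz
      linarith
    · exact h1
  have hzn : z ≤ n := by
    by_contra hcon
    have := hzmin n (by omega)
    have huniv : sweep n n = Finset.univ := by ext i; simp [sweep, i.isLt]
    rw [huniv, hμone] at this
    linarith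
  have hkz : k < z := by
    by_contra hcon
    have h1 : μvol G m (sweep n z) ≤ μvol G m (sweep n k) := by
      apply hμvol_mono
      intro i hi
      simp only [sweep, Finset.mem_filter, Finset.mem_univ, true_and] at hi ⊢
      omega
    rw [← hRc_sweep] at h1
    linarith [hz, hμRc, hb0]
  -- definition of k'
  have hex : ∃ h : ℕ, 1 - 3/64 ≤ f h := ⟨k, by linarith [hfk]⟩
  set k' : ℕ := Nat.find hex with hk'
  have hk'spec : 1 - 3/64 ≤ f k' := Nat.find_spec hex
  have hk'min : ∀ h : ℕ, h < k' → f h < 1 - 3/64 := fun h hh =>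
    lt_of_not_ge (Nat.find_min hex hh)
  have hk'le : k ≥ k' := Nat.find_le (by linarith [hfk])
  have hk'pos : 1 ≤ k' := by
    by_contra hcon
    have h0 : k' = 0 := by omega
    have : f 0 = 0 := by
      have : sweep n 0 = ∅ := by ext i; simp [sweep]
      simp [hf, this]
    rw [h0, this] at hk'spec
    norm_num at hk'spec
  -- the radius ladder
  set ρ : ℕ → ℝ := fun t => if ht : t < n then r ⟨t, ht⟩ ^ 2 else 0 with hρ
  have hρnn : ∀ t, 0 ≤ ρ t := by
    intro t; rw [hρ]; dsimp only; split
    · exact sq_nonneg _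
    · exact le_refl 0
  have hρanti : ∀ s t : ℕ, s ≤ t → ρ t ≤ ρ s := by
    intro s t hst
    by_cases ht : t < n
    · have hs : s < n := lt_of_le_of_lt hst ht
      have h1 : r ⟨t, ht⟩ ≤ r ⟨s, hs⟩ := hsorted _ _ (Fin.mk_le_mk.mpr hst)
      rw [hρ]; dsimp only; rw [dif_pos ht, dif_pos hs]
      exact pow_le_pow_left₀ (hrnn _) h1 2
    · calc ρ t = 0 := by rw [hρ]; exact dif_neg ht
        _ ≤ ρ s := hρnn s
  have hρi : ∀ i : Fin n, ρ (i : ℕ) = r i ^ 2 := by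
    intro i; rw [hρ]; dsimp only; rw [dif_pos i.isLt]
  have hρz : ρ (z - 1) ≤ 8 / b := by
    have hzn' : z - 1 < n := by omega
    have hjle : ∀ i ∈ sweep n z, r ⟨z - 1, hzn'⟩ ^ 2 ≤ r i ^ 2 := by
      intro i hi
      simp only [sweep, Finset.mem_filter, Finset.mem_univ, true_and] at hi
      have hle : i ≤ (⟨z - 1, hzn'⟩ : Fin n) := by
        rw [Fin.le_def]; dsimp; omega
      exact pow_le_pow_left₀ (hrnn _) (hsorted _ _ hle) 2
    have h1 : μvol G m (sweep n z) * r ⟨z - 1, hzn'⟩ ^ 2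
        ≤ ∑ i ∈ sweep n z, μ i * r i ^ 2 := by
      rw [hμvolS, Finset.sum_mul]
      exact Finset.sum_le_sum fun i hi =>
        mul_le_mul_of_nonneg_left (hjle i hi) (hμpos i).le
    have h2 := h1.trans (hsub1 _)
    have h3 : (b / 8) * r ⟨z - 1, hzn'⟩ ^ 2 ≤ 1 :=
      le_trans (mul_le_mul_of_nonneg_right hz (sq_nonneg _)) h2
    have h4 : ρ (z - 1) = r ⟨z - 1, hzn'⟩ ^ 2 := by
      rw [hρ]; dsimp only; rw [dif_pos hzn']
    rw [h4, le_div_iff₀ hb0]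
    nlinarith
  have hhalf : ∀ i : Fin n, (i : ℕ) < k → ρ (z - 1) ≤ r i ^ 2 / 2 := by
    intro i hik
    have h16 := hout i hik
    have he : (8:ℝ)/b = 16/b/2 := by ring
    linarith
  -- volume facts
  have hvolμ : ∀ S : Finset (Fin n), (vol G S : ℝ) = 2 * m * μvol G m S := by
    intro S
    unfold vol μvol
    push_cast
    rw [Finset.mul_sum]
    exact Finset.sum_congr rfl fun i _ => by field_simp
  have hvol_add : ∀ S : Finset (Fin n), (vol G S : ℝ) + (vol G Sᶜ : ℝ) = 2 * m := by
    intro S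
    rw [hvolμ, hvolμ, ← mul_add, hμvolS, hμvolS, Finset.sum_add_sum_compl, hμsum, mul_one]
  have hvolS_lt : ∀ h, h < z → (vol G (sweep n h) : ℝ) < (vol G (sweep n h)ᶜ : ℝ) := by
    intro h hh
    have h1 := hzmin h hh
    have h2 : (vol G (sweep n h) : ℝ) = 2 * m * μvol G m (sweep n h) := hvolμ _
    have h3 := hvol_add (sweep n h)
    nlinarith [hm0]
  have hvolpos : ∀ h, 1 ≤ h → (0:ℝ) < vol G (sweep n h) := by
    intro h hh
    have hmem : (⟨0, by omega⟩ : Fin n) ∈ sweep n h := by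
      simp only [sweep, Finset.mem_filter, Finset.mem_univ, true_and]; omega
    unfold vol
    push_cast
    refine Finset.sum_pos' (fun i _ => by positivity) ⟨⟨0, by omega⟩, hmem, ?_⟩
    exact_mod_cast hdeg _
  have hsγ : 0 < Real.sqrt γ := Real.sqrt_pos.mpr hγ0
  set D : ℕ → ℝ := fun h => ρ (h - 1) - ρ h with hD
  have hD0 : ∀ h, 0 ≤ D h := fun h => sub_nonneg.mpr (hρanti (h - 1) h (by omega))
  -- the main sweep cut existence, by contradiction
  obtain ⟨h, hhk', hhz, hcond⟩ :
      ∃ h : ℕ, k' ≤ h ∧ h < z ∧ conductance G (sweep n h) ≤ 2048 * Real.sqrt γ := by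
    by_contra hcon
    push_neg at hcon
    have hcut : ∀ h, k' ≤ h → h < z →
        (2048 * Real.sqrt γ) * (vol G (sweep n h) : ℝ) ≤ (cutSize G (sweep n h) : ℝ) := by
      intro h h1 h2
      have hc := hcon h h1 h2
      have hv := hvolpos h (le_trans hk'pos h1)
      have hmin : min (vol G (sweep n h) : ℝ) (vol G (sweep n h)ᶜ : ℝ)
          = (vol G (sweep n h) : ℝ) := min_eq_left (hvolS_lt h h2).le
      unfold conductance at hc
      rw [hmin] at hc
      exact ((lt_div_iff₀ hv).mp hc).le
    -- lower bound for the level sums of volumes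
    have hAsub : sweep n (k' - 1) ⊆ sweep n k := by
      intro i hi
      simp only [sweep, Finset.mem_filter, Finset.mem_univ, true_and] at hi ⊢
      omega
    set A : Finset (Fin n) := sweep n k \ sweep n (k' - 1) with hA
    have hAmem : ∀ i ∈ A, k' - 1 ≤ (i : ℕ) ∧ (i : ℕ) < k := by
      intro i hi
      simp only [hA, sweep, Finset.mem_sdiff, Finset.mem_filter, Finset.mem_univ,
        true_and] at hi
      omega
    have key_low : (f k - f (k' - 1)) * m
        ≤ ∑ h ∈ Finset.Ico k' z, (vol G (sweep n h) : ℝ) * D h := by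
      have e1 : ∀ h ∈ Finset.Ico k' z, (vol G (sweep n h) : ℝ) * D h
          = ∑ i : Fin n, (if (i : ℕ) < h then 2 * m * μ i * D h else 0) := by
        intro h _
        rw [hvolμ, hμvolS]
        rw [sweep, Finset.sum_filter, Finset.mul_sum, Finset.sum_mul]
        exact Finset.sum_congr rfl fun i _ => by split <;> ring
      rw [Finset.sum_congr rfl e1, Finset.sum_comm]
      have hinner_nn : ∀ i : Fin n,
          0 ≤ ∑ h ∈ Finset.Ico k' z, (if (i : ℕ) < h then 2 * m * μ i * D h else 0) := by
        intro i
        refine Finset.sum_nonneg fun h _ => ?_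
        split
        · have := hD0 h
          have := (hμpos i).le
          positivity
        · exact le_refl 0
      have hstep : ∑ i ∈ A, (∑ h ∈ Finset.Ico k' z,
            (if (i : ℕ) < h then 2 * m * μ i * D h else 0))
          ≤ ∑ i : Fin n, (∑ h ∈ Finset.Ico k' z,
            (if (i : ℕ) < h then 2 * m * μ i * D h else 0)) :=
        Finset.sum_le_sum_of_subset_of_nonneg (Finset.subset_univ A)
          (fun i _ _ => hinner_nn i)
      refine le_trans ?_ hstep
      have hinner : ∀ i ∈ A, ∑ h ∈ Finset.Ico k' z,
          (if (i : ℕ) < h then 2 * m * μ i * D h else 0)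
          = 2 * m * μ i * (ρ (i : ℕ) - ρ (z - 1)) := by
        intro i hi
        obtain ⟨hi1, hi2⟩ := hAmem i hi
        rw [← Finset.sum_filter]
        have hfilter : (Finset.Ico k' z).filter (fun h => (i : ℕ) < h)
            = Finset.Ico ((i : ℕ) + 1) z := by
          ext h
          simp only [Finset.mem_filter, Finset.mem_Ico]
          omega
        rw [hfilter, ← Finset.mul_sum]
        congr 1
        have hDh : ∀ h ∈ Finset.Ico ((i : ℕ) + 1) z,
            D h = (fun t => ρ (t - 1)) h - (fun t => ρ (t - 1)) (h + 1) := by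
          intro h _
          simp only [hD, Nat.add_sub_cancel]
        rw [Finset.sum_congr rfl hDh, tele_aux _ (by omega : (i : ℕ) + 1 ≤ z)]
        simp only [Nat.add_sub_cancel]
      rw [Finset.sum_congr rfl hinner]
      have hAsum : ∑ i ∈ A, μ i * r i ^ 2 = f k - f (k' - 1) := by
        rw [hA, Finset.sum_sdiff_eq_sub hAsub]
      have hperm : ∀ i ∈ A, 2 * m * μ i * (r i ^ 2 / 2)
          ≤ 2 * m * μ i * (ρ (i : ℕ) - ρ (z - 1)) := by
        intro i hi
        obtain ⟨_, hi2⟩ := hAmem i hi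
        have hh2 := hhalf i hi2
        have hri := hρi i
        apply mul_le_mul_of_nonneg_left ?_
          (mul_nonneg (by positivity) (hμpos i).le)
        rw [hri] at *
        linarith
      calc (f k - f (k' - 1)) * m = ∑ i ∈ A, 2 * m * μ i * (r i ^ 2 / 2) := by
            have e2 : ∑ i ∈ A, 2 * m * μ i * (r i ^ 2 / 2)
                = (∑ i ∈ A, μ i * r i ^ 2) * m := by
              rw [Finset.sum_mul]
              exact Finset.sum_congr rfl fun i _ => by ring
            rw [e2, hAsum]
        _ ≤ ∑ i ∈ A, 2 * m * μ i * (ρ (i : ℕ) - ρ (z - 1)) := Finset.sum_le_sum hperm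
    -- upper bound: level sums of cuts vs edge differences
    have hcompl : ∀ hh : ℕ, (sweep n hh)ᶜ
        = Finset.univ.filter (fun j : Fin n => ¬ ((j : ℕ) < hh)) := by
      intro hh; ext j; simp [sweep]
    set TT : ℝ := ∑ i : Fin n, ∑ j : Fin n,
        (if G.Adj i j then |r i ^ 2 - r j ^ 2| else 0) with hTTdef
    have key_up : ∑ h ∈ Finset.Ico k' z, (cutSize G (sweep n h) : ℝ) * D h ≤ TT := by
      have e2 : ∀ h ∈ Finset.Ico k' z, (cutSize G (sweep n h) : ℝ) * D h
          = ∑ i : Fin n, ∑ j : Fin n,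
            (if ((i : ℕ) < h ∧ ¬ ((j : ℕ) < h)) ∧ G.Adj i j then D h else 0) := by
        intro h _
        unfold cutSize
        rw [hcompl h]
        push_cast
        rw [sweep, Finset.sum_filter, Finset.sum_mul]
        refine Finset.sum_congr rfl fun i _ => ?_
        by_cases hih : (i : ℕ) < h
        · simp only [hih, if_true, true_and]
          rw [Finset.sum_filter, Finset.sum_mul]
          refine Finset.sum_congr rfl fun j _ => ?_
          by_cases hjh : (j : ℕ) < h <;> by_cases hadj : G.Adj i j <;>
            simp [hjh, hadj]
        · simp [hih]
      rw [Finset.sum_congr rfl e2, Finset.sum_comm, hTTdef]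
      refine Finset.sum_le_sum fun i _ => ?_
      rw [Finset.sum_comm]
      refine Finset.sum_le_sum fun j _ => ?_
      by_cases hadj : G.Adj i j
      · simp only [hadj, and_true, if_true]
        rw [← Finset.sum_filter]
        have hsubset : (Finset.Ico k' z).filter
            (fun h => (i : ℕ) < h ∧ ¬ ((j : ℕ) < h))
            ⊆ Finset.Ico ((i : ℕ) + 1) ((j : ℕ) + 1) := by
          intro h hh
          simp only [Finset.mem_filter, Finset.mem_Ico] at hh ⊢
          omega
        have hle1 := Finset.sum_le_sum_of_subset_of_nonneg hsubset
          (fun h _ _ => hD0 h)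
        refine le_trans hle1 ?_
        by_cases hij : (i : ℕ) < (j : ℕ)
        · have hDh : ∀ h ∈ Finset.Ico ((i : ℕ) + 1) ((j : ℕ) + 1),
              D h = (fun t => ρ (t - 1)) h - (fun t => ρ (t - 1)) (h + 1) := by
            intro h _; simp only [hD, Nat.add_sub_cancel]
          rw [Finset.sum_congr rfl hDh,
            tele_aux _ (by omega : (i : ℕ) + 1 ≤ (j : ℕ) + 1)]
          simp only [Nat.add_sub_cancel]
          rw [hρi i, hρi j]
          exact le_abs_self _
        · have hempty : Finset.Ico ((i : ℕ) + 1) ((j : ℕ) + 1) = ∅ :=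
            Finset.Ico_eq_empty (by omega)
          rw [hempty, Finset.sum_empty]
          exact abs_nonneg _
      · simp [hadj]
    -- Cauchy–Schwarz bound on TT
    have hTTnn : 0 ≤ TT := by
      rw [hTTdef]
      refine Finset.sum_nonneg fun i _ => Finset.sum_nonneg fun j _ => ?_
      split
      · exact abs_nonneg _
      · exact le_refl 0
    have hdeg_sumite : ∀ i : Fin n,
        ∑ j : Fin n, (if G.Adj i j then (1:ℝ) else 0) = G.degree i := by
      intro i
      rw [Finset.sum_boole]
      congr 1
      rw [← SimpleGraph.neighborFinset_eq_filter, SimpleGraph.card_neighborFinset_eq_degree]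
    have hdegr : ∑ i : Fin n, (G.degree i : ℝ) * r i ^ 2 = 2 * m := by
      have hdm : ∀ i : Fin n, (G.degree i : ℝ) = 2 * m * μ i := by
        intro i; rw [hμ i]; field_simp
      rw [Finset.sum_congr rfl (fun i _ => by rw [hdm i])]
      have e : ∀ i : Fin n, 2 * (m:ℝ) * μ i * r i ^ 2 = 2 * (m:ℝ) * (μ i * r i ^ 2) :=
        fun i => by ring
      rw [Finset.sum_congr rfl (fun i _ => e i), ← Finset.mul_sum, hvar, mul_one]
    have hprod : ∑ p : Fin n × Fin n,
        ((if G.Adj p.1 p.2 then |r p.1 - r p.2| else 0)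
          * (if G.Adj p.1 p.2 then r p.1 + r p.2 else 0)) = TT := by
      rw [Fintype.sum_prod_type, hTTdef]
      refine Finset.sum_congr rfl fun i _ => Finset.sum_congr rfl fun j _ => ?_
      by_cases hadj : G.Adj i j
      · simp only [hadj, if_true]
        rw [show r i ^ 2 - r j ^ 2 = (r i - r j) * (r i + r j) by ring, abs_mul,
          abs_of_nonneg (by linarith [hrnn i, hrnn j] : 0 ≤ r i + r j)]
      · simp [hadj]
    have hCS2 : TT ^ 2 ≤
        (∑ p : Fin n × Fin n, (if G.Adj p.1 p.2 then (r p.1 - r p.2) ^ 2 else 0))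
          * (∑ p : Fin n × Fin n, (if G.Adj p.1 p.2 then (r p.1 + r p.2) ^ 2 else 0)) := by
      rw [← hprod]
      have hcs := Finset.sum_mul_sq_le_sq_mul_sq Finset.univ
        (fun p : Fin n × Fin n => if G.Adj p.1 p.2 then |r p.1 - r p.2| else 0)
        (fun p : Fin n × Fin n => if G.Adj p.1 p.2 then r p.1 + r p.2 else 0)
      refine le_trans hcs (le_of_eq ?_)
      congr 1
      · refine Finset.sum_congr rfl fun p _ => ?_
        by_cases hadj : G.Adj p.1 p.2 <;> simp [hadj, sq_abs]
      · refine Finset.sum_congr rfl fun p _ => ?_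
        by_cases hadj : G.Adj p.1 p.2 <;> simp [hadj]
    have hE1 : (∑ p : Fin n × Fin n,
        (if G.Adj p.1 p.2 then (r p.1 - r p.2) ^ 2 else 0)) ≤ 4 * γ * m := by
      have step1 : ∀ p : Fin n × Fin n,
          (if G.Adj p.1 p.2 then (r p.1 - r p.2) ^ 2 else 0)
            ≤ (if G.Adj p.1 p.2 then ‖v p.1 - v p.2‖ ^ 2 else 0) := by
        intro p
        by_cases hadj : G.Adj p.1 p.2
        · simp only [hadj, if_true]
          have habs : |r p.1 - r p.2| ≤ ‖v p.1 - v p.2‖ := by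
            rw [hr p.1, hr p.2]
            refine le_trans (abs_norm_sub_norm_le _ _) (le_of_eq ?_)
            rw [sub_sub_sub_cancel_right]
          calc (r p.1 - r p.2) ^ 2 = |r p.1 - r p.2| ^ 2 := (sq_abs _).symm
            _ ≤ ‖v p.1 - v p.2‖ ^ 2 := pow_le_pow_left₀ (abs_nonneg _) habs 2
        · simp [hadj]
      have step2 : ∑ p : Fin n × Fin n,
          (if G.Adj p.1 p.2 then ‖v p.1 - v p.2‖ ^ 2 else 0)
          = 2 * edgeSum G (fun i j => ‖v i - v j‖ ^ 2) := by
        rw [Fintype.sum_prod_type]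
        unfold edgeSum
        ring
      have step3 : edgeSum G (fun i j => ‖v i - v j‖ ^ 2) ≤ 2 * γ * m := by
        have h5 : edgeSum G (fun i j => ‖v i - v j‖ ^ 2)
            = ((1 / (m:ℝ)) * edgeSum G (fun i j => ‖v i - v j‖ ^ 2)) * m := by
          field_simp
        rw [h5]
        calc ((1 / (m:ℝ)) * edgeSum G (fun i j => ‖v i - v j‖ ^ 2)) * m
            ≤ (2 * γ) * m := mul_le_mul_of_nonneg_right henergy hm0.le
          _ = 2 * γ * m := by ring
      calc ∑ p : Fin n × Fin n, (if G.Adj p.1 p.2 then (r p.1 - r p.2) ^ 2 else 0)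
          ≤ ∑ p : Fin n × Fin n, (if G.Adj p.1 p.2 then ‖v p.1 - v p.2‖ ^ 2 else 0) :=
            Finset.sum_le_sum fun p _ => step1 p
        _ = 2 * edgeSum G (fun i j => ‖v i - v j‖ ^ 2) := step2
        _ ≤ 2 * (2 * γ * m) := by linarith
        _ = 4 * γ * m := by ring
    have hE2 : (∑ p : Fin n × Fin n,
        (if G.Adj p.1 p.2 then (r p.1 + r p.2) ^ 2 else 0)) ≤ 8 * m := by
      have step1 : ∀ p : Fin n × Fin n,
          (if G.Adj p.1 p.2 then (r p.1 + r p.2) ^ 2 else 0)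
            ≤ (if G.Adj p.1 p.2 then 2 * r p.1 ^ 2 + 2 * r p.2 ^ 2 else 0) := by
        intro p
        by_cases hadj : G.Adj p.1 p.2
        · simp only [hadj, if_true]
          nlinarith [sq_nonneg (r p.1 - r p.2)]
        · simp [hadj]
      have step2 : ∑ p : Fin n × Fin n,
          (if G.Adj p.1 p.2 then 2 * r p.1 ^ 2 + 2 * r p.2 ^ 2 else 0)
          = 4 * ∑ i : Fin n, (G.degree i : ℝ) * r i ^ 2 := by
        rw [Fintype.sum_prod_type]
        have e3 : ∀ i : Fin n, ∑ j : Fin n,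
            (if G.Adj i j then 2 * r i ^ 2 + 2 * r j ^ 2 else 0)
            = 2 * r i ^ 2 * (G.degree i : ℝ)
              + ∑ j : Fin n, (if G.Adj i j then 2 * r j ^ 2 else 0) := by
          intro i
          rw [← hdeg_sumite i, Finset.mul_sum, ← Finset.sum_add_distrib]
          refine Finset.sum_congr rfl fun j _ => ?_
          by_cases hadj : G.Adj i j
          · simp only [hadj, if_true]
            ring
          · simp [hadj]
        rw [Finset.sum_congr rfl (fun i _ => e3 i), Finset.sum_add_distrib]
        have e4 : ∑ i : Fin n, ∑ j : Fin n, (if G.Adj i j then 2 * r j ^ 2 else 0)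
            = ∑ j : Fin n, 2 * r j ^ 2 * (G.degree j : ℝ) := by
          rw [Finset.sum_comm]
          refine Finset.sum_congr rfl fun j _ => ?_
          rw [← hdeg_sumite j, Finset.mul_sum]
          refine Finset.sum_congr rfl fun i _ => ?_
          by_cases hadj : G.Adj j i
          · simp [hadj, hadj.symm]
          · have hadj' : ¬ G.Adj i j := fun hc => hadj hc.symm
            simp [hadj, hadj']
        rw [e4]
        simp only [show ∀ i : Fin n, 2 * r i ^ 2 * (G.degree i : ℝ)
          = 2 * ((G.degree i : ℝ) * r i ^ 2) from fun i => by ring]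
        rw [← Finset.mul_sum]
        ring
      calc ∑ p : Fin n × Fin n, (if G.Adj p.1 p.2 then (r p.1 + r p.2) ^ 2 else 0)
          ≤ ∑ p : Fin n × Fin n,
              (if G.Adj p.1 p.2 then 2 * r p.1 ^ 2 + 2 * r p.2 ^ 2 else 0) :=
            Finset.sum_le_sum fun p _ => step1 p
        _ = 4 * ∑ i : Fin n, (G.degree i : ℝ) * r i ^ 2 := step2
        _ = 4 * (2 * m) := by rw [hdegr]
        _ = 8 * m := by ring
    have key_TT : TT ≤ m * (6 * Real.sqrt γ) := by
      have hE1nn : 0 ≤ ∑ p : Fin n × Fin n,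
          (if G.Adj p.1 p.2 then (r p.1 - r p.2) ^ 2 else 0) :=
        Finset.sum_nonneg fun p _ => by split <;> [exact sq_nonneg _; exact le_refl 0]
      have h1 : TT ^ 2 ≤ (4 * γ * m) * (8 * m) :=
        le_trans hCS2 (mul_le_mul hE1 hE2
          (Finset.sum_nonneg fun p _ => by split <;> [exact sq_nonneg _; exact le_refl 0])
          (by positivity))
      have h2 : TT ≤ Real.sqrt ((4 * γ * m) * (8 * m)) := by
        rw [← Real.sqrt_sq hTTnn]
        exact Real.sqrt_le_sqrt h1
      refine le_trans h2 ?_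
      have h3 : (4 * γ * (m:ℝ)) * (8 * m) ≤ ((m:ℝ) * (6 * Real.sqrt γ)) ^ 2 := by
        have e5 : ((m:ℝ) * (6 * Real.sqrt γ)) ^ 2 = 36 * (Real.sqrt γ) ^ 2 * (m:ℝ) ^ 2 := by
          ring
        rw [e5, Real.sq_sqrt hγ0.le]
        nlinarith [hm0, hγ0]
      calc Real.sqrt ((4 * γ * m) * (8 * m))
          ≤ Real.sqrt (((m:ℝ) * (6 * Real.sqrt γ)) ^ 2) := Real.sqrt_le_sqrt h3
        _ = (m:ℝ) * (6 * Real.sqrt γ) := Real.sqrt_sq (by positivity)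
    -- combine everything into a numeric contradiction
    have hgap : 27 / 3968 ≤ f k - f (k' - 1) := by
      have h1 := hk'min (k' - 1) (by omega)
      linarith [hfk]
    have hchain : (2048 * Real.sqrt γ) * ((f k - f (k' - 1)) * m)
        ≤ ∑ h ∈ Finset.Ico k' z, (cutSize G (sweep n h) : ℝ) * D h := by
      calc (2048 * Real.sqrt γ) * ((f k - f (k' - 1)) * m)
          ≤ (2048 * Real.sqrt γ)
              * ∑ h ∈ Finset.Ico k' z, (vol G (sweep n h) : ℝ) * D h :=
            mul_le_mul_of_nonneg_left key_low (by positivity)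
        _ = ∑ h ∈ Finset.Ico k' z,
              ((2048 * Real.sqrt γ) * (vol G (sweep n h) : ℝ)) * D h := by
            rw [Finset.mul_sum]
            exact Finset.sum_congr rfl fun h _ => by ring
        _ ≤ ∑ h ∈ Finset.Ico k' z, (cutSize G (sweep n h) : ℝ) * D h := by
            refine Finset.sum_le_sum fun h hh => ?_
            rw [Finset.mem_Ico] at hh
            exact mul_le_mul_of_nonneg_right (hcut h hh.1 hh.2) (hD0 h)
    have hfinal := le_trans hchain (le_trans key_up key_TT)
    nlinarith [mul_le_mul_of_nonneg_left hgap
        (by positivity : (0:ℝ) ≤ 2048 * Real.sqrt γ * m),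
      hfinal, mul_pos hm0 hsγ]
  refine ⟨h, le_trans hk'pos hhk', hhz, hcond, ?_⟩
  exact le_trans hk'spec (hf_mono _ _ hhk')
end

section
/- For all real numbers y, z with y ≥ z, (y − z)² ≤ 2·(sgn(y)·y² − sgn(z)·z²). -/
/-- The sign function of the paper: `sgn(t) = 1` if `t ≥ 0` and `−1` otherwise. -/
noncomputable def sgn (t : ℝ) : ℝ := if 0 ≤ t then 1 else -1

/-- **Fact A.3 (fct:ab2).** For all reals `y ≥ z`,
`(y − z)² ≤ 2·(sgn(y)·y² − sgn(z)·z²)`. -/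
theorem sq_sub_le_two_sgn_sq (y z : ℝ) (h : z ≤ y) :
    (y - z) ^ 2 ≤ 2 * (sgn y * y ^ 2 - sgn z * z ^ 2) := by
  unfold sgn
  rcases le_or_gt 0 y with hy | hy <;> rcases le_or_gt 0 z with hz | hz <;>
    simp [hy, hz, not_le.mpr, *] <;> nlinarith [sq_nonneg (y - z), sq_nonneg (y + z)]
end

section
/- Let x : V → ℝ and define y : V → ℝ by y_i = sgn(x_i)·x_i². Then Σ_{{i,j}∈E} |y_i − y_j| ≤ √( 2 · (Σ_{{i,j}∈E} (x_i − x_j)²) · (Σ_{i∈V} d_i x_i²) ). -/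
open Finset

lemma abs_sgn_sq_sub (a b : ℝ) :
    |sgn a * a ^ 2 - sgn b * b ^ 2| ≤ |a - b| * (|a| + |b|) := by
  have h1 := le_abs_self (a - b)
  have h2 := neg_abs_le (a - b)
  have h3 := abs_nonneg (a - b)
  unfold sgn
  split_ifs with ha hb hb
  · rw [abs_of_nonneg ha, abs_of_nonneg hb, abs_le]
    constructor <;> nlinarith
  · push_neg at hb
    rw [abs_of_nonneg ha, abs_of_neg hb, abs_le]
    constructor <;> nlinarith
  · push_neg at ha
    rw [abs_of_neg ha, abs_of_nonneg hb, abs_le]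
    constructor <;> nlinarith
  · push_neg at ha hb
    rw [abs_of_neg ha, abs_of_neg hb, abs_le]
    constructor <;> nlinarith

/-- **Cauchy–Schwarz bound in the proof of Theorem 2.3.** For `y_i = sgn(x_i)·x_i²`,
`∑_{{i,j}∈E} |y_i − y_j| ≤ √( 2 · (∑_{{i,j}∈E} (x_i − x_j)²) · (∑_i d_i x_i²) )`. -/
theorem edge_sum_abs_sgn_sq_le {n : ℕ}
    (G : SimpleGraph (Fin n)) [DecidableRel G.Adj]
    (x : Fin n → ℝ) (y : Fin n → ℝ) (hy : ∀ i, y i = sgn (x i) * x i ^ 2) :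
    edgeSum G (fun i j => |y i - y j|) ≤
      Real.sqrt (2 * edgeSum G (fun i j => (x i - x j) ^ 2) *
        ∑ i, (G.degree i : ℝ) * x i ^ 2) := by
  classical
  set s : Finset (Fin n × Fin n) := Finset.univ ×ˢ Finset.univ with hs
  set f : Fin n × Fin n → ℝ :=
    fun p => if G.Adj p.1 p.2 then |x p.1 - x p.2| else 0 with hf
  set g : Fin n × Fin n → ℝ :=
    fun p => if G.Adj p.1 p.2 then |x p.1| + |x p.2| else 0 with hg
  set A : ℝ := ∑ i, ∑ j, if G.Adj i j then |y i - y j| else 0 with hA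
  set B : ℝ := ∑ i, ∑ j, if G.Adj i j then (x i - x j) ^ 2 else 0 with hB
  set C : ℝ := ∑ i, (G.degree i : ℝ) * x i ^ 2 with hC
  have hB0 : 0 ≤ B := by
    apply Finset.sum_nonneg; intro i _; apply Finset.sum_nonneg; intro j _
    split <;> positivity
  have hC0 : 0 ≤ C := by
    apply Finset.sum_nonneg; intro i _; positivity
  -- degree sum
  have hdeg : ∀ i : Fin n, (∑ j, if G.Adj i j then x i ^ 2 else 0)
      = (G.degree i : ℝ) * x i ^ 2 := by
    intro i
    rw [← Finset.sum_filter, Finset.sum_const, nsmul_eq_mul]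
    congr 2
    rw [SimpleGraph.degree, SimpleGraph.neighborFinset_eq_filter]
  have hsum1 : (∑ i, ∑ j, if G.Adj i j then x i ^ 2 else 0) = C := by
    simp_rw [hdeg]
    exact hC.symm
  have hsum2 : (∑ i, ∑ j, if G.Adj i j then x j ^ 2 else 0) = C := by
    rw [Finset.sum_comm]
    simp_rw [fun i j => SimpleGraph.adj_comm G j i]
    simpa using hsum1
  -- bound on ∑ g²
  have hg2 : (∑ p ∈ s, (g p) ^ 2) ≤ 4 * C := by
    have h1 : (∑ p ∈ s, (g p) ^ 2)
        ≤ ∑ i, ∑ j, if G.Adj i j then 2 * (x i ^ 2 + x j ^ 2) else 0 := by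
      rw [hs, Finset.sum_product]
      apply Finset.sum_le_sum; intro i _; apply Finset.sum_le_sum; intro j _
      simp only [hg]
      split
      · have := abs_nonneg (x i); have := abs_nonneg (x j)
        have hi := sq_abs (x i); have hj := sq_abs (x j)
        nlinarith [sq_nonneg (|x i| - |x j|)]
      · norm_num
    calc (∑ p ∈ s, (g p) ^ 2) ≤ _ := h1
      _ = 4 * C := by
          have : ∀ i j : Fin n, (if G.Adj i j then 2 * (x i ^ 2 + x j ^ 2) else 0)
              = 2 * ((if G.Adj i j then x i ^ 2 else 0) + (if G.Adj i j then x j ^ 2 else 0)) := by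
            intro i j; split <;> ring
          simp_rw [this, ← Finset.mul_sum, Finset.sum_add_distrib]
          rw [hsum1, hsum2]; ring
  have hf2 : (∑ p ∈ s, (f p) ^ 2) = B := by
    rw [hs, Finset.sum_product]
    apply Finset.sum_congr rfl; intro i _
    apply Finset.sum_congr rfl; intro j _
    simp only [hf]
    split
    · rw [sq_abs]
    · norm_num
  -- step 1: A ≤ ∑ f g
  have hAfg : A ≤ ∑ p ∈ s, f p * g p := by
    rw [hs, Finset.sum_product, hA]
    apply Finset.sum_le_sum; intro i _; apply Finset.sum_le_sum; intro j _
    simp only [hf, hg]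
    split
    · rw [hy i, hy j]; exact abs_sgn_sq_sub (x i) (x j)
    · norm_num
  -- Cauchy–Schwarz
  have hcs : (∑ p ∈ s, f p * g p) ≤ Real.sqrt B * Real.sqrt (4 * C) := by
    have h := sum_mul_sq_le_sq_mul_sq s f g
    have hfg0 : 0 ≤ ∑ p ∈ s, f p * g p := by
      apply Finset.sum_nonneg; intro p _
      simp only [hf, hg]
      split
      · positivity
      · norm_num
    have hsq : (∑ p ∈ s, f p * g p) ^ 2 ≤ B * (4 * C) := by
      calc (∑ p ∈ s, f p * g p) ^ 2 ≤ (∑ p ∈ s, f p ^ 2) * ∑ p ∈ s, g p ^ 2 := h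
        _ ≤ B * (4 * C) := by
            rw [hf2]
            exact mul_le_mul_of_nonneg_left hg2 hB0
    calc (∑ p ∈ s, f p * g p) = Real.sqrt ((∑ p ∈ s, f p * g p) ^ 2) := by
          rw [Real.sqrt_sq hfg0]
      _ ≤ Real.sqrt (B * (4 * C)) := Real.sqrt_le_sqrt hsq
      _ = Real.sqrt B * Real.sqrt (4 * C) := Real.sqrt_mul hB0 _
  have hA2 : A ≤ 2 * Real.sqrt (B * C) := by
    calc A ≤ Real.sqrt B * Real.sqrt (4 * C) := hAfg.trans hcs
      _ = 2 * Real.sqrt (B * C) := by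
          rw [show (4 : ℝ) * C = 2 ^ 2 * C by ring, Real.sqrt_mul (by positivity),
            Real.sqrt_sq (by norm_num : (0:ℝ) ≤ 2), Real.sqrt_mul hB0]
          ring
  have hgoal : edgeSum G (fun i j => |y i - y j|) = A / 2 := rfl
  have hgoal2 : edgeSum G (fun i j => (x i - x j) ^ 2) = B / 2 := rfl
  rw [hgoal, hgoal2, show (2 : ℝ) * (B / 2) * C = B * C by ring]
  linarith
end

section
/- Let x : V → ℝ with vertices relabeled so that x_1 ≥ x_2 ≥ … ≥ x_n, and for 1 ≤ i ≤ n−1 let S_i = {1,…,i}. Suppose (1/m)·Σ_{{i,j}∈E} (x_i − x_j)² ≤ ε₁ and (1/(2m))·Σ_{i∈V} d_i x_i² ≤ ε₂ for some ε₁, ε₂ > 0, and suppose there are indices l < r and constants c, δ > 0 with vol({1,…,l}) ≥ 2cm, vol({r,…,n}) ≥ 2cm, and x_l − x_r ≥ δ. Then there exists i with l ≤ i ≤ r−1 such that φ(S_i) ≤ 2·√(ε₁·ε₂) / (c·δ²). -/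
open Finset

lemma gmono {a b : ℝ} (hab : a ≤ b) : a * |a| ≤ b * |b| := by
  rcases le_total 0 a with ha|ha
  · rw [abs_of_nonneg ha, abs_of_nonneg (ha.trans hab)]; nlinarith
  · rcases le_total 0 b with hb|hb
    · rw [abs_of_nonpos ha, abs_of_nonneg hb]; nlinarith
    · rw [abs_of_nonpos ha, abs_of_nonpos hb]; nlinarith

lemma gdiff (a b : ℝ) (hab : b ≤ a) : a * |a| - b * |b| ≤ |a - b| * (|a| + |b|) := by
  rw [abs_of_nonneg (by linarith : 0 ≤ a - b)]
  rcases le_total 0 a with ha|ha <;> rcases le_total 0 b with hb|hb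
  · rw [abs_of_nonneg ha, abs_of_nonneg hb]; nlinarith
  · rw [abs_of_nonneg ha, abs_of_nonpos hb]; nlinarith
  · rw [abs_of_nonpos ha, abs_of_nonneg hb]; nlinarith
  · rw [abs_of_nonpos ha, abs_of_nonpos hb]; nlinarith

lemma gdiff2 (a b : ℝ) : abs (a * abs a - b * abs b) ≤ |a - b| * (|a| + |b|) := by
  rcases le_total b a with h|h
  · rw [abs_of_nonneg (sub_nonneg.mpr (gmono h))]; exact gdiff a b h
  · rw [abs_sub_comm, abs_sub_comm a b, add_comm]
    rw [abs_of_nonneg (sub_nonneg.mpr (gmono h))]; exact gdiff b a h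

lemma ggap (a b δ : ℝ) (hδ : 0 < δ) (h : δ ≤ a - b) : δ^2/2 ≤ a * |a| - b * |b| := by
  rcases le_total 0 b with hb|hb
  · rw [abs_of_nonneg hb, abs_of_nonneg (by linarith : (0:ℝ) ≤ a)]; nlinarith
  · rcases le_total 0 a with ha|ha
    · rw [abs_of_nonneg ha, abs_of_nonpos hb]
      nlinarith [sq_nonneg (a + b), mul_le_mul h h hδ.le (by linarith : (0:ℝ) ≤ a - b)]
    · rw [abs_of_nonpos ha, abs_of_nonpos hb]; nlinarith

/-- The sweep cut `S_i = {1,…,i}` containing all vertices up to and including `i`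
(vertices relabeled so that `x` is nonincreasing). -/
def sweepLe {n : ℕ} (i : Fin n) : Finset (Fin n) := Finset.univ.filter (fun j => j ≤ i)

/-- **Deterministic core of Theorem 2.3 (Rounding Roundable Embeddings).**
If the one-dimensional embedding `x` (sorted nonincreasingly) has edge energy
`(1/m)·∑_{{i,j}∈E}(x_i−x_j)² ≤ ε₁`, variance `(1/(2m))·∑ d_i x_i² ≤ ε₂`, and there are
indices `l < r` with `vol({1,…,l}) ≥ 2cm`, `vol({r,…,n}) ≥ 2cm`, and `x_l − x_r ≥ δ`,
then some sweep cut `S_i` with `l ≤ i ≤ r−1` has conductance at most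
`2·√(ε₁·ε₂)/(c·δ²)`. -/
theorem balanced_sweep_cut {n : ℕ}
    (G : SimpleGraph (Fin n)) [DecidableRel G.Adj]
    (m : ℕ) (hm : m = G.edgeFinset.card) (hm1 : 1 ≤ m)
    (hdeg : ∀ i, 0 < G.degree i)
    (x : Fin n → ℝ)
    (hsorted : ∀ i j : Fin n, i ≤ j → x j ≤ x i)
    (ε₁ ε₂ : ℝ) (hε₁ : 0 < ε₁) (hε₂ : 0 < ε₂)
    (henergy : (1 / (m : ℝ)) * edgeSum G (fun i j => (x i - x j) ^ 2) ≤ ε₁)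
    (hvar : (1 / (2 * (m : ℝ))) * ∑ i, (G.degree i : ℝ) * x i ^ 2 ≤ ε₂)
    (l r : Fin n) (hlr : l < r)
    (c δ : ℝ) (hc : 0 < c) (hδ : 0 < δ)
    (hvolL : 2 * c * m ≤ (vol G (Finset.univ.filter (fun j => j ≤ l)) : ℝ))
    (hvolR : 2 * c * m ≤ (vol G (Finset.univ.filter (fun j => r ≤ j)) : ℝ))
    (hgap : δ ≤ x l - x r) :
    ∃ i : Fin n, l ≤ i ∧ i < r ∧
      conductance G (sweepLe i) ≤ 2 * Real.sqrt (ε₁ * ε₂) / (c * δ ^ 2) := by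
  by_contra hcon
  push_neg at hcon
  set K : ℝ := 2 * Real.sqrt (ε₁ * ε₂) / (c * δ ^ 2) with hK
  have hmR : (0:ℝ) < m := by exact_mod_cast hm1
  have hsq : 0 < Real.sqrt (ε₁ * ε₂) := Real.sqrt_pos.mpr (mul_pos hε₁ hε₂)
  have hKpos : 0 < K := by positivity
  set F : Fin n → ℝ := fun u => x u * |x u| with hF
  set f : ℕ → ℝ := fun k => if h : k < n then F ⟨k, h⟩ else 0 with hf
  have hfF : ∀ u : Fin n, f u.val = F u := fun u => by simp [hf, u.isLt]
  set w : ℕ → ℝ := fun k => f k - f (k+1) with hw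
  have hwnn : ∀ k, k + 1 < n → 0 ≤ w k := by
    intro k hk
    have h1 : f (k+1) ≤ f k := by
      simp only [hf, dif_pos hk, dif_pos (Nat.lt_of_succ_lt hk)]
      exact gmono (hsorted ⟨k, Nat.lt_of_succ_lt hk⟩ ⟨k+1, hk⟩ (by simp [Fin.le_def]))
    simpa [hw] using sub_nonneg.mpr h1
  have htel : ∀ a b : ℕ, a ≤ b → ∑ k ∈ Finset.Ico a b, w k = f a - f b := by
    intro a b hab
    rw [Finset.sum_Ico_eq_sum_range]
    have h := Finset.sum_range_sub' (fun i => f (a + i)) (b - a)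
    simpa [hw, ← add_assoc, Nat.add_sub_cancel' hab] using h
  set cutR : ℕ → ℝ := fun k => ∑ u : Fin n, ∑ v : Fin n,
      if G.Adj u v ∧ (u:ℕ) ≤ k ∧ k < (v:ℕ) then (1:ℝ) else 0 with hcutR
  have hcutnn : ∀ k, 0 ≤ cutR k := by
    intro k
    refine Finset.sum_nonneg fun u _ => Finset.sum_nonneg fun v _ => ?_
    split_ifs <;> norm_num
  have hcutA : ∀ i : Fin n, (cutSize G (sweepLe i) : ℝ) = cutR i.val := by
    intro i
    rw [hcutR, cutSize, sweepLe, compl_filter]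
    push_cast
    rw [sum_filter]
    refine Finset.sum_congr rfl fun u _ => ?_
    rw [sum_filter]
    split_ifs with hu
    · refine Finset.sum_congr rfl fun v _ => ?_
      have hu' : (u:ℕ) ≤ (i:ℕ) := hu
      by_cases hv : v ≤ i
      · rw [if_neg (not_not_intro hv), if_neg]
        rintro ⟨-, -, h3⟩
        exact absurd hv (not_le.mpr (Fin.lt_def.mpr h3))
      · rw [if_pos hv]
        have hv' : (i:ℕ) < (v:ℕ) := Fin.lt_def.mp (not_le.mp hv)
        by_cases ha : G.Adj u v
        · rw [if_pos ha, if_pos ⟨ha, hu', hv'⟩]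
        · rw [if_neg ha, if_neg (by tauto)]
    · refine (Finset.sum_eq_zero fun v _ => ?_).symm
      rw [if_neg]
      rintro ⟨-, h2, -⟩
      exact hu h2
  -- volume bounds
  have hvolS : ∀ i : Fin n, l ≤ i → 2*c*m ≤ (vol G (sweepLe i) : ℝ) := by
    intro i hi
    refine hvolL.trans ?_
    have hsub : (univ.filter (fun j => j ≤ l)) ⊆ sweepLe i := by
      intro j hj
      simp only [sweepLe, mem_filter, mem_univ, true_and] at *
      exact hj.trans hi
    have h2 : vol G (univ.filter (fun j => j ≤ l)) ≤ vol G (sweepLe i) :=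
      Finset.sum_le_sum_of_subset hsub
    exact_mod_cast h2
  have hvolC : ∀ i : Fin n, i < r → 2*c*m ≤ (vol G (sweepLe i)ᶜ : ℝ) := by
    intro i hi
    refine hvolR.trans ?_
    have hsub : (univ.filter (fun j => r ≤ j)) ⊆ (sweepLe i)ᶜ := by
      intro j hj
      simp only [sweepLe, mem_compl, mem_filter, mem_univ, true_and, not_le] at *
      exact lt_of_lt_of_le hi hj
    have h2 : vol G (univ.filter (fun j => r ≤ j)) ≤ vol G (sweepLe i)ᶜ :=
      Finset.sum_le_sum_of_subset hsub
    exact_mod_cast h2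
  -- per-level lower bound on the cut
  have hcut : ∀ k ∈ Finset.Ico l.val r.val, K * (2*c*m) < cutR k := by
    intro k hk
    rw [Finset.mem_Ico] at hk
    have hkn : k < n := lt_trans hk.2 r.isLt
    set i : Fin n := ⟨k, hkn⟩ with hi
    have hli : l ≤ i := hk.1
    have hir : i < r := hk.2
    have hcond := hcon i hli hir
    have hmin : 2*c*m ≤ min (vol G (sweepLe i) : ℝ) ((vol G (sweepLe i)ᶜ : ℝ)) :=
      le_min (hvolS i hli) (hvolC i hir)
    have hminpos : (0:ℝ) < min (vol G (sweepLe i) : ℝ) ((vol G (sweepLe i)ᶜ : ℝ)) :=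
      lt_of_lt_of_le (by positivity) hmin
    rw [conductance] at hcond
    have h3 : K * min (vol G (sweepLe i) : ℝ) ((vol G (sweepLe i)ᶜ : ℝ))
        < (cutSize G (sweepLe i) : ℝ) := by
      rw [lt_div_iff₀ hminpos] at hcond
      linarith
    calc K * (2*c*m) ≤ K * min (vol G (sweepLe i) : ℝ) ((vol G (sweepLe i)ᶜ : ℝ)) :=
          mul_le_mul_of_nonneg_left hmin hKpos.le
      _ < (cutSize G (sweepLe i) : ℝ) := h3
      _ = cutR k := hcutA i
  -- double counting
  have hFle : ∀ a b : Fin n, a ≤ b → F b ≤ F a := fun a b h => gmono (hsorted a b h)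
  have hA : ∑ k ∈ Finset.range (n-1), w k * cutR k
      = ∑ u : Fin n, ∑ v : Fin n, (if G.Adj u v ∧ u < v then F u - F v else 0) := by
    have step : ∀ k, w k * cutR k = ∑ u : Fin n, ∑ v : Fin n,
        (if G.Adj u v ∧ (u:ℕ) ≤ k ∧ k < (v:ℕ) then w k else 0) := by
      intro k
      rw [hcutR, Finset.mul_sum]
      refine Finset.sum_congr rfl fun u _ => ?_
      rw [Finset.mul_sum]
      refine Finset.sum_congr rfl fun v _ => ?_
      split_ifs <;> simp
    calc ∑ k ∈ Finset.range (n-1), w k * cutR k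
        = ∑ k ∈ Finset.range (n-1), ∑ u : Fin n, ∑ v : Fin n,
            (if G.Adj u v ∧ (u:ℕ) ≤ k ∧ k < (v:ℕ) then w k else 0) :=
          Finset.sum_congr rfl fun k _ => step k
      _ = ∑ u : Fin n, ∑ k ∈ Finset.range (n-1), ∑ v : Fin n,
            (if G.Adj u v ∧ (u:ℕ) ≤ k ∧ k < (v:ℕ) then w k else 0) := Finset.sum_comm
      _ = ∑ u : Fin n, ∑ v : Fin n, ∑ k ∈ Finset.range (n-1),
            (if G.Adj u v ∧ (u:ℕ) ≤ k ∧ k < (v:ℕ) then w k else 0) :=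
          Finset.sum_congr rfl fun u _ => Finset.sum_comm
      _ = ∑ u : Fin n, ∑ v : Fin n, (if G.Adj u v ∧ u < v then F u - F v else 0) := by
          refine Finset.sum_congr rfl fun u _ => Finset.sum_congr rfl fun v _ => ?_
          by_cases hadj : G.Adj u v
          · by_cases huv : u < v
            · rw [if_pos ⟨hadj, huv⟩]
              have hcong : ∀ k ∈ Finset.range (n-1),
                  (if G.Adj u v ∧ (u:ℕ) ≤ k ∧ k < (v:ℕ) then w k else 0)
                    = if (u:ℕ) ≤ k ∧ k < (v:ℕ) then w k else 0 := by
                intro k _; simp [hadj]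
              rw [Finset.sum_congr rfl hcong, ← Finset.sum_filter]
              have hfil : (Finset.range (n-1)).filter (fun k => (u:ℕ) ≤ k ∧ k < (v:ℕ))
                  = Finset.Ico (u:ℕ) (v:ℕ) := by
                ext k
                simp only [Finset.mem_filter, Finset.mem_range, Finset.mem_Ico]
                have := v.isLt
                omega
              rw [hfil, htel _ _ (le_of_lt huv), hfF, hfF]
            · rw [if_neg (by tauto)]
              refine Finset.sum_eq_zero fun k _ => if_neg ?_
              rintro ⟨-, h1, h2⟩
              exact huv (Fin.lt_def.mpr (lt_of_le_of_lt h1 h2))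
          · rw [if_neg (by tauto)]
            exact Finset.sum_eq_zero fun k _ => if_neg (by tauto)
  -- symmetrization
  have key : (∑ a : Fin n, ∑ b : Fin n, (if G.Adj a b ∧ a < b then F a - F b else 0))
           + (∑ a : Fin n, ∑ b : Fin n, (if G.Adj b a ∧ b < a then F b - F a else 0))
           = ∑ a : Fin n, ∑ b : Fin n, (if G.Adj a b then |F a - F b| else 0) := by
    rw [← Finset.sum_add_distrib]
    refine Finset.sum_congr rfl fun a _ => ?_
    rw [← Finset.sum_add_distrib]
    refine Finset.sum_congr rfl fun b _ => ?_
    by_cases hadj : G.Adj a b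
    · rcases lt_or_gt_of_ne (G.ne_of_adj hadj) with h|h
      · rw [if_pos ⟨hadj, h⟩, if_neg (by rintro ⟨-, h2⟩; exact absurd h2 (asymm h)),
          if_pos hadj, abs_of_nonneg (sub_nonneg.mpr (hFle a b h.le)), add_zero]
      · rw [if_neg (by rintro ⟨-, h2⟩; exact absurd h2 (asymm h)), if_pos ⟨hadj.symm, h⟩,
          if_pos hadj, abs_sub_comm, abs_of_nonneg (sub_nonneg.mpr (hFle b a h.le)), zero_add]
    · rw [if_neg (by tauto), if_neg (by rintro ⟨h2, -⟩; exact hadj h2.symm), if_neg hadj,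
        add_zero]
  have hswap : (∑ a : Fin n, ∑ b : Fin n, (if G.Adj a b ∧ a < b then F a - F b else 0))
      = ∑ a : Fin n, ∑ b : Fin n, (if G.Adj b a ∧ b < a then F b - F a else 0) :=
    Finset.sum_comm
  -- Cauchy-Schwarz bound
  have hE : edgeSum G (fun i j => (x i - x j) ^ 2) ≤ m * ε₁ := by
    rw [one_div, inv_mul_le_iff₀ hmR] at henergy
    exact henergy
  have hV : ∑ i, (G.degree i : ℝ) * x i ^ 2 ≤ 2 * m * ε₂ := by
    rw [one_div, inv_mul_le_iff₀ (by positivity)] at hvar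
    linarith
  have hdegsum : ∀ a : Fin n, ∑ b : Fin n, (if G.Adj a b then (1:ℝ) else 0) = G.degree a := by
    intro a
    rw [Finset.sum_boole, ← SimpleGraph.neighborFinset_eq_filter,
      SimpleGraph.card_neighborFinset_eq_degree]
  have hP2 : ∑ a : Fin n, ∑ b : Fin n, (if G.Adj a b then |x a - x b| else 0)^2 ≤ 2 * m * ε₁ := by
    have : ∀ a b : Fin n, (if G.Adj a b then |x a - x b| else 0)^2
        = (if G.Adj a b then (x a - x b)^2 else 0) := by
      intro a b; split_ifs <;> simp [sq_abs]
    calc ∑ a : Fin n, ∑ b : Fin n, (if G.Adj a b then |x a - x b| else 0)^2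
        = ∑ a : Fin n, ∑ b : Fin n, (if G.Adj a b then (x a - x b)^2 else 0) := by
          exact Finset.sum_congr rfl fun a _ => Finset.sum_congr rfl fun b _ => this a b
      _ = 2 * edgeSum G (fun i j => (x i - x j) ^ 2) := by rw [edgeSum]; ring
      _ ≤ 2 * (m * ε₁) := by linarith
      _ = 2 * m * ε₁ := by ring
  have hQ2 : ∑ a : Fin n, ∑ b : Fin n, (if G.Adj a b then (|x a| + |x b|) else 0)^2
      ≤ 8 * m * ε₂ := by
    have hpt : ∀ a b : Fin n, (if G.Adj a b then (|x a| + |x b|) else 0)^2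
        ≤ (if G.Adj a b then 2*(x a^2 + x b^2) else 0) := by
      intro a b
      split_ifs
      · nlinarith [sq_abs (x a), sq_abs (x b), sq_nonneg (|x a| - |x b|)]
      · norm_num
    have hsplit : ∑ a : Fin n, ∑ b : Fin n, (if G.Adj a b then 2*(x a^2 + x b^2) else 0)
        = 4 * ∑ i, (G.degree i : ℝ) * x i ^ 2 := by
      have h1 : ∀ a b : Fin n, (if G.Adj a b then 2*(x a^2 + x b^2) else 0)
          = 2 * x a^2 * (if G.Adj a b then (1:ℝ) else 0)
            + 2 * x b^2 * (if G.Adj a b then (1:ℝ) else 0) := by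
        intro a b; split_ifs <;> ring
      calc ∑ a : Fin n, ∑ b : Fin n, (if G.Adj a b then 2*(x a^2 + x b^2) else 0)
          = (∑ a : Fin n, ∑ b : Fin n, 2 * x a^2 * (if G.Adj a b then (1:ℝ) else 0))
            + (∑ a : Fin n, ∑ b : Fin n, 2 * x b^2 * (if G.Adj a b then (1:ℝ) else 0)) := by
            rw [← Finset.sum_add_distrib]
            refine Finset.sum_congr rfl fun a _ => ?_
            rw [← Finset.sum_add_distrib]
            exact Finset.sum_congr rfl fun b _ => h1 a b
        _ = (∑ a : Fin n, 2 * x a^2 * (G.degree a : ℝ))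
            + (∑ b : Fin n, 2 * x b^2 * (G.degree b : ℝ)) := by
            congr 1
            · refine Finset.sum_congr rfl fun a _ => ?_
              rw [← Finset.mul_sum, hdegsum]
            · rw [Finset.sum_comm]
              refine Finset.sum_congr rfl fun b _ => ?_
              have : ∀ a : Fin n, (if G.Adj a b then (1:ℝ) else 0)
                  = (if G.Adj b a then (1:ℝ) else 0) := fun a => by simp [G.adj_comm]
              rw [Finset.sum_congr rfl fun a _ => by rw [this a], ← Finset.mul_sum, hdegsum]
        _ = 4 * ∑ i, (G.degree i : ℝ) * x i ^ 2 := by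
            rw [← two_mul]; rw [Finset.mul_sum, Finset.mul_sum]; ring_nf
            refine Finset.sum_congr rfl fun a _ => by ring
      done
    calc ∑ a : Fin n, ∑ b : Fin n, (if G.Adj a b then (|x a| + |x b|) else 0)^2
        ≤ ∑ a : Fin n, ∑ b : Fin n, (if G.Adj a b then 2*(x a^2 + x b^2) else 0) :=
          Finset.sum_le_sum fun a _ => Finset.sum_le_sum fun b _ => hpt a b
      _ = 4 * ∑ i, (G.degree i : ℝ) * x i ^ 2 := hsplit
      _ ≤ 4 * (2 * m * ε₂) := by linarith
      _ = 8 * m * ε₂ := by ring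
  -- the Cauchy-Schwarz step on the product finset
  have hCS : ∑ a : Fin n, ∑ b : Fin n, (if G.Adj a b then |F a - F b| else 0)
      ≤ 4 * m * Real.sqrt (ε₁ * ε₂) := by
    set P : Fin n × Fin n → ℝ := fun p => if G.Adj p.1 p.2 then |x p.1 - x p.2| else 0 with hP
    set Q : Fin n × Fin n → ℝ := fun p => if G.Adj p.1 p.2 then (|x p.1| + |x p.2|) else 0 with hQ
    have h1 : ∑ a : Fin n, ∑ b : Fin n, (if G.Adj a b then |F a - F b| else 0)
        ≤ ∑ p ∈ (univ ×ˢ univ : Finset (Fin n × Fin n)), P p * Q p := by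
      rw [Finset.sum_product]
      refine Finset.sum_le_sum fun a _ => Finset.sum_le_sum fun b _ => ?_
      simp only [hP, hQ]
      split_ifs with h
      · exact gdiff2 (x a) (x b)
      · norm_num
    have h2 : (∑ p ∈ (univ ×ˢ univ : Finset (Fin n × Fin n)), P p * Q p)^2
        ≤ (∑ p ∈ (univ ×ˢ univ : Finset (Fin n × Fin n)), P p ^ 2)
          * (∑ p ∈ (univ ×ˢ univ : Finset (Fin n × Fin n)), Q p ^ 2) :=
      Finset.sum_mul_sq_le_sq_mul_sq _ _ _
    have hPsum : (∑ p ∈ (univ ×ˢ univ : Finset (Fin n × Fin n)), P p ^ 2) ≤ 2 * m * ε₁ := by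
      rw [Finset.sum_product]; exact hP2
    have hQsum : (∑ p ∈ (univ ×ˢ univ : Finset (Fin n × Fin n)), Q p ^ 2) ≤ 8 * m * ε₂ := by
      rw [Finset.sum_product]; exact hQ2
    have hPnn : (0:ℝ) ≤ ∑ p ∈ (univ ×ˢ univ : Finset (Fin n × Fin n)), P p ^ 2 :=
      Finset.sum_nonneg fun p _ => sq_nonneg _
    have hQnn : (0:ℝ) ≤ ∑ p ∈ (univ ×ˢ univ : Finset (Fin n × Fin n)), Q p ^ 2 :=
      Finset.sum_nonneg fun p _ => sq_nonneg _
    have hprodnn : (0:ℝ) ≤ ∑ p ∈ (univ ×ˢ univ : Finset (Fin n × Fin n)), P p * Q p := by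
      refine Finset.sum_nonneg fun p _ => mul_nonneg ?_ ?_ <;>
        · simp only [hP, hQ]; split_ifs <;> positivity
    have hsq2 : (∑ p ∈ (univ ×ˢ univ : Finset (Fin n × Fin n)), P p * Q p)^2
        ≤ (2 * m * ε₁) * (8 * m * ε₂) := by
      exact h2.trans (mul_le_mul hPsum hQsum hQnn (by positivity))
    have hrhs : (4 * m * Real.sqrt (ε₁ * ε₂))^2 = (2 * m * ε₁) * (8 * m * ε₂) := by
      rw [mul_pow, mul_pow, Real.sq_sqrt (by positivity)]
      ring
    have hfinal : ∑ p ∈ (univ ×ˢ univ : Finset (Fin n × Fin n)), P p * Q p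
        ≤ 4 * m * Real.sqrt (ε₁ * ε₂) := by
      refine le_of_pow_le_pow_left₀ two_ne_zero (by positivity) ?_
      rw [hrhs]
      exact hsq2
    exact h1.trans hfinal
  -- upper bound on the weighted cut sum
  have hBle : ∑ k ∈ Finset.range (n-1), w k * cutR k ≤ 2 * m * Real.sqrt (ε₁ * ε₂) := by
    have h2B : (∑ k ∈ Finset.range (n-1), w k * cutR k)
        + (∑ k ∈ Finset.range (n-1), w k * cutR k)
        = ∑ a : Fin n, ∑ b : Fin n, (if G.Adj a b then |F a - F b| else 0) := by
      rw [hA]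
      nth_rewrite 2 [hswap]
      exact key
    linarith
  -- lower bound
  have hsubIco : Finset.Ico l.val r.val ⊆ Finset.range (n-1) := by
    intro k hk
    rw [Finset.mem_Ico] at hk
    rw [Finset.mem_range]
    have := r.isLt
    omega
  have hlow : ∑ k ∈ Finset.Ico l.val r.val, w k * cutR k
      ≤ ∑ k ∈ Finset.range (n-1), w k * cutR k := by
    refine Finset.sum_le_sum_of_subset_of_nonneg hsubIco fun k hk _ => ?_
    rw [Finset.mem_range] at hk
    exact mul_nonneg (hwnn k (by omega)) (hcutnn k)
  have hwsum : ∑ k ∈ Finset.Ico l.val r.val, w k = F l - F r := by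
    rw [htel _ _ (le_of_lt hlr), hfF, hfF]
  have hgap2 : δ^2/2 ≤ F l - F r := ggap (x l) (x r) δ hδ hgap
  have hex : ∃ k₀ ∈ Finset.Ico l.val r.val, (0:ℝ) < w k₀ := by
    have h0 : ∑ k ∈ Finset.Ico l.val r.val, (0:ℝ) < ∑ k ∈ Finset.Ico l.val r.val, w k := by
      rw [Finset.sum_const, smul_zero, hwsum]
      exact lt_of_lt_of_le (by positivity : (0:ℝ) < δ^2/2) hgap2
    exact Finset.exists_lt_of_sum_lt h0
  have hstrict : ∑ k ∈ Finset.Ico l.val r.val, w k * (K * (2*c*m))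
      < ∑ k ∈ Finset.Ico l.val r.val, w k * cutR k := by
    refine Finset.sum_lt_sum (fun k hk => ?_) ?_
    · have hk' := hk
      rw [Finset.mem_Ico] at hk'
      have hkn : k + 1 < n := by have := r.isLt; omega
      exact mul_le_mul_of_nonneg_left (hcut k hk).le (hwnn k hkn)
    · obtain ⟨k₀, hk₀mem, hk₀⟩ := hex
      exact ⟨k₀, hk₀mem, mul_lt_mul_of_pos_left (hcut k₀ hk₀mem) hk₀⟩
  have hlhs : (δ^2/2) * (K * (2*c*m)) ≤ ∑ k ∈ Finset.Ico l.val r.val, w k * (K * (2*c*m)) := by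
    rw [← Finset.sum_mul, hwsum]
    exact mul_le_mul_of_nonneg_right hgap2 (by positivity)
  have hval : (δ^2/2) * (K * (2*c*m)) = 2 * m * Real.sqrt (ε₁ * ε₂) := by
    rw [hK]
    field_simp
  linarith
end
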